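/- arXiv:2307.09722 — 4 statements merged into one kernel-verified Lean document; each statement's English description precedes it below -/
import Mathlib

section
/- Suppose g : ℝⁿ → ℝⁿ is continuously differentiable on the closed ball B_r(0) of radius r > 0 centered at the origin, and set δ = ‖g(0)‖. Let L be an invertible n×n real matrix with γ = ‖L⁻¹‖, and suppose that for some ε > 0 one has ‖∇g(θ) − L‖ ≤ ε for all θ ∈ B_r(0). If εγ < 1 and δ ≤ r(1 − γε)/γ, then there exists a unique θ ∈ B_r(0) such that g(θ) = 0, and moreover ‖θ‖ ≤ δγ/(1 − εγ). -/
open Set Metric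

/-- Proposition 2.1, special case of Dontchev's theorem.
If `g : ℝⁿ → ℝⁿ` is continuously differentiable on the closed ball of radius `r > 0`
about the origin, `δ = ‖g 0‖`, `L` is an invertible `n × n` matrix with
`γ = ‖L⁻¹‖` (operator norm), `‖∇g θ - L‖ ≤ ε` on the ball, `ε γ < 1` and
`δ ≤ r (1 - γ ε)/γ`, then there is a unique `θ` in the ball with `g θ = 0`,
and moreover `‖θ‖ ≤ δ γ / (1 - ε γ)`. -/
theorem switch_point_existence_result
    {n : ℕ} (hn : 0 < n)
    (g : (Fin n → ℝ) → Fin n → ℝ) (r : ℝ) (hr : 0 < r)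
    (hg : ContDiffOn ℝ 1 g (closedBall (0 : Fin n → ℝ) r))
    (L : Matrix (Fin n) (Fin n) ℝ) (hL : IsUnit L)
    (γ : ℝ)
    (hγ : γ = ‖LinearMap.toContinuousLinearMap (Matrix.mulVecLin L⁻¹)‖)
    (δ : ℝ) (hδ : δ = ‖g 0‖)
    (ε : ℝ) (hε : 0 < ε)
    (hder : ∀ θ ∈ closedBall (0 : Fin n → ℝ) r,
      ‖fderivWithin ℝ g (closedBall (0 : Fin n → ℝ) r) θ -
        LinearMap.toContinuousLinearMap (Matrix.mulVecLin L)‖ ≤ ε)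
    (h1 : ε * γ < 1) (h2 : δ ≤ r * (1 - γ * ε) / γ) :
    ∃ θ ∈ closedBall (0 : Fin n → ℝ) r,
      g θ = 0 ∧ ‖θ‖ ≤ δ * γ / (1 - ε * γ) ∧
      ∀ θ' ∈ closedBall (0 : Fin n → ℝ) r, g θ' = 0 → θ' = θ := by
  haveI : Nonempty (Fin n) := ⟨⟨0, hn⟩⟩
  set S := closedBall (0 : Fin n → ℝ) r with hSdef
  set A := LinearMap.toContinuousLinearMap (Matrix.mulVecLin L) with hAdef
  set B := LinearMap.toContinuousLinearMap (Matrix.mulVecLin L⁻¹) with hBdef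
  have hdet : IsUnit L.det := (Matrix.isUnit_iff_isUnit_det L).mp hL
  have hBA : ∀ v, B (A v) = v := by
    intro v
    have h : L⁻¹ * L = 1 := Matrix.nonsing_inv_mul L hdet
    show L⁻¹.mulVec (L.mulVec v) = v
    rw [Matrix.mulVec_mulVec, h, Matrix.one_mulVec]
  have hAB : ∀ v, A (B v) = v := by
    intro v
    have h : L * L⁻¹ = 1 := Matrix.mul_nonsing_inv L hdet
    show L.mulVec (L⁻¹.mulVec v) = v
    rw [Matrix.mulVec_mulVec, h, Matrix.one_mulVec]
  have hBle : ∀ v, ‖B v‖ ≤ γ * ‖v‖ := by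
    intro v; rw [hγ]; exact B.le_opNorm v
  have hγpos : 0 < γ := by
    rcases lt_or_eq_of_le (hγ ▸ norm_nonneg B) with h | h
    · exact h
    · exfalso
      have hB0 : B = 0 := by rw [hγ] at h; exact norm_eq_zero.mp h.symm
      have := hBA (fun _ => (1 : ℝ))
      rw [hB0] at this
      simpa using congrFun this ⟨0, hn⟩
  have hconv : Convex ℝ S := convex_closedBall _ _
  have hu : UniqueDiffOn ℝ S :=
    uniqueDiffOn_convex hconv (by
      rw [hSdef, interior_closedBall _ hr.ne']
      exact nonempty_ball.mpr hr)
  have hgdiff : DifferentiableOn ℝ g S := hg.differentiableOn one_ne_zero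
  -- key mean value estimate
  set f : (Fin n → ℝ) → Fin n → ℝ := fun θ => g θ - A θ with hfdef
  have hfdiff : DifferentiableOn ℝ f S :=
    hgdiff.sub (A.differentiable.differentiableOn)
  have hbound : ∀ x ∈ S, ‖fderivWithin ℝ f S x‖ ≤ ε := by
    intro x hx
    have hA' : HasFDerivWithinAt (fun θ => A θ) A S x :=
      A.hasFDerivAt.hasFDerivWithinAt
    have : fderivWithin ℝ f S x = fderivWithin ℝ g S x - A := by
      rw [hfdef]
      rw [fderivWithin_fun_sub (hu x hx) (hgdiff x hx)
        hA'.differentiableWithinAt, hA'.fderivWithin (hu x hx)]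
    rw [this]
    exact hder x hx
  have hmv : ∀ x ∈ S, ∀ y ∈ S, ‖f x - f y‖ ≤ ε * ‖x - y‖ := fun x hx y hy =>
    hconv.norm_image_sub_le_of_norm_fderivWithin_le hfdiff hbound hy hx
  -- the Newton map
  set Φ : (Fin n → ℝ) → Fin n → ℝ := fun θ => θ - B (g θ) with hΦdef
  have hsub : ∀ x y, Φ x - Φ y = -(B (f x - f y)) := by
    intro x y
    have h1' := hBA x
    have h2' := hBA y
    simp only [hΦdef, hfdef, map_sub]
    rw [h1', h2']
    abel
  have hlip : ∀ x ∈ S, ∀ y ∈ S, ‖Φ x - Φ y‖ ≤ ε * γ * ‖x - y‖ := by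
    intro x hx y hy
    rw [hsub, norm_neg]
    calc ‖B (f x - f y)‖ ≤ γ * ‖f x - f y‖ := hBle _
      _ ≤ γ * (ε * ‖x - y‖) := by
          exact mul_le_mul_of_nonneg_left (hmv x hx y hy) hγpos.le
      _ = ε * γ * ‖x - y‖ := by ring
  have h0S : (0 : Fin n → ℝ) ∈ S := mem_closedBall_self hr.le
  have hΦ0 : ‖Φ 0‖ ≤ γ * δ := by
    have : Φ 0 = -(B (g 0)) := by simp [hΦdef]
    rw [this, norm_neg, hδ]
    exact hBle _
  have hγδ : γ * δ ≤ r * (1 - γ * ε) := by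
    have := mul_le_mul_of_nonneg_left h2 hγpos.le
    rwa [mul_div_cancel₀ _ hγpos.ne'] at this
  have hmaps : ∀ x ∈ S, Φ x ∈ S := by
    intro x hx
    rw [hSdef, mem_closedBall_zero_iff]
    have hx' : ‖x‖ ≤ r := by rwa [hSdef, mem_closedBall_zero_iff] at hx
    calc ‖Φ x‖ ≤ ‖Φ x - Φ 0‖ + ‖Φ 0‖ := by
          simpa using norm_add_le (Φ x - Φ 0) (Φ 0)
      _ ≤ ε * γ * ‖x - 0‖ + γ * δ := add_le_add (hlip x hx 0 h0S) hΦ0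
      _ ≤ ε * γ * r + r * (1 - γ * ε) := by
          rw [sub_zero]
          exact add_le_add (mul_le_mul_of_nonneg_left hx'
            (by positivity)) hγδ
      _ = r := by ring
  -- fixed point on the subtype
  haveI : Nonempty S := ⟨⟨0, h0S⟩⟩
  haveI : CompleteSpace S := IsClosed.completeSpace_coe (hs := isClosed_closedBall)
  set φ : S → S := fun x => ⟨Φ x.1, hmaps x.1 x.2⟩ with hφdef
  have hKnn : (0 : ℝ) ≤ ε * γ := by positivity
  set K : NNReal := ⟨ε * γ, hKnn⟩ with hKdef
  have hC : ContractingWith K φ := by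
    constructor
    · exact_mod_cast h1
    · apply LipschitzWith.of_dist_le_mul
      intro x y
      simp only [Subtype.dist_eq, dist_eq_norm]
      exact hlip x.1 x.2 y.1 y.2
  set θ₀ : S := hC.fixedPoint φ with hθ₀def
  have hfix : Φ θ₀.1 = θ₀.1 := congrArg Subtype.val (hC.fixedPoint_isFixedPt)
  have hgθ : g θ₀.1 = 0 := by
    have hB0 : B (g θ₀.1) = 0 := by
      have := hfix
      rw [hΦdef] at this
      simpa [sub_eq_self] using this
    have := hAB (g θ₀.1)
    rw [hB0] at this
    simpa using this.symm
  -- norm bound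
  have hnb : ‖θ₀.1‖ ≤ δ * γ / (1 - ε * γ) := by
    have h3 : ‖θ₀.1‖ ≤ ε * γ * ‖θ₀.1‖ + γ * δ := by
      calc ‖θ₀.1‖ = ‖Φ θ₀.1‖ := by rw [hfix]
        _ ≤ ‖Φ θ₀.1 - Φ 0‖ + ‖Φ 0‖ := by
            simpa using norm_add_le (Φ θ₀.1 - Φ 0) (Φ 0)
        _ ≤ ε * γ * ‖θ₀.1 - 0‖ + γ * δ :=
            add_le_add (hlip θ₀.1 θ₀.2 0 h0S) hΦ0
        _ = ε * γ * ‖θ₀.1‖ + γ * δ := by rw [sub_zero]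
    rw [le_div_iff₀ (by linarith)]
    nlinarith
  refine ⟨θ₀.1, θ₀.2, hgθ, hnb, ?_⟩
  intro θ' hθ' hgθ'
  have hfix' : φ ⟨θ', hθ'⟩ = ⟨θ', hθ'⟩ := by
    apply Subtype.ext
    simp [hφdef, hΦdef, hgθ']
  have := hC.fixedPoint_unique hfix'
  exact congrArg Subtype.val this
end

section
/- Assume Dynamics Smoothness holds, the objective C : ℝⁿ → ℝ is continuously differentiable, and both Φ_{EJ}(T) and Ψ_{FI}(T) are invertible. For each sufficiently small Δs, let x⁺ denote a solution of the boundary-value problem with the switch point perturbed to s + Δs (which exists by the stability of solutions with respect to the switch point) chosen so that ‖x⁺_J(0) − x_J(0)‖ ≤ c|Δs| for a constant c independent of Δs. Then the limit lim_{Δs → 0} (C(x⁺(T)) − C(x(T)))/Δs exists and equals H₀(x(s), p(s), s) − H₁(x(s), p(s), s) = p(s)·[F₀(x(s),s) − F₁(x(s),s)], where H_j(x, p, t) = p·F_j(x,t) and p : [0,T] → ℝⁿ is the row-vector costate solving ṗ(t) = −p(t)∇ₓF(x(t),t) for t ≠ s, with p_F(T) = ∇_F C(x(T)) and p_J(0)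 = 0. -/
open Set Metric Filter Topology

/-- **Dynamics Smoothness** for a dynamics `Fd` with spatial Jacobian `DFd`, on the tube
`{(χ,t) : t ∈ [a,b], ‖χ - x t‖ ≤ ρ}` around the trajectory `x` :
`Fd` is continuously differentiable on the tube, and `χ ↦ DFd χ t` is Lipschitz
with constant `L`, uniformly in `t`. -/
structure DynSmooth (n : ℕ) (Fd : (Fin n → ℝ) → ℝ → Fin n → ℝ)
    (DFd : (Fin n → ℝ) → ℝ → (Fin n → ℝ) →L[ℝ] (Fin n → ℝ))
    (x : ℝ → Fin n → ℝ) (a b ρ L : ℝ) : Prop where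
  contDiffOn : ContDiffOn ℝ 1 (fun p : (Fin n → ℝ) × ℝ => Fd p.1 p.2)
    {p : (Fin n → ℝ) × ℝ | p.2 ∈ Icc a b ∧ ‖p.1 - x p.2‖ ≤ ρ}
  hasFDeriv : ∀ χ t, t ∈ Icc a b → ‖χ - x t‖ ≤ ρ →
    HasFDerivAt (fun y => Fd y t) (DFd χ t) χ
  contDeriv : ContinuousOn (fun p : (Fin n → ℝ) × ℝ => DFd p.1 p.2)
    {p : (Fin n → ℝ) × ℝ | p.2 ∈ Icc a b ∧ ‖p.1 - x p.2‖ ≤ ρ}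
  lip : ∀ t χ₁ χ₂, t ∈ Icc a b → ‖χ₁ - x t‖ ≤ ρ → ‖χ₂ - x t‖ ≤ ρ →
    ‖DFd χ₁ t - DFd χ₂ t‖ ≤ L * ‖χ₁ - χ₂‖

/-- `y` is a solution of the boundary-value problem with switched dynamics, where the
switch from `F₀` to `F₁` occurs at time `σ`: `ẏ = F₀(y,t)` on `[0,σ)`, `ẏ = F₁(y,t)` on
`(σ,T]`, with boundary conditions `y_I(0) = b_I` and `y_E(T) = b_E`. -/
def IsSwitchSol {n : ℕ} (T σ : ℝ) (I E : Finset (Fin n)) (bI bE : Fin n → ℝ)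
    (F₀ F₁ : (Fin n → ℝ) → ℝ → Fin n → ℝ) (y : ℝ → Fin n → ℝ) : Prop :=
  ContinuousOn y (Icc 0 T) ∧
  (∀ t ∈ Ico 0 σ, HasDerivWithinAt y (F₀ (y t) t) (Icc 0 T) t) ∧
  (∀ t ∈ Ioc σ T, HasDerivWithinAt y (F₁ (y t) t) (Icc 0 T) t) ∧
  (∀ i ∈ I, y 0 i = bI i) ∧
  (∀ i ∈ E, y T i = bE i)

/-- The Jacobian matrix `∇ₓF(x(t),t)` of the switched dynamics along the trajectory `x`,
represented as a matrix: `DF₀` before the switch point `s`, `DF₁` after. -/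
noncomputable def jacMat {n : ℕ}
    (DF₀ DF₁ : (Fin n → ℝ) → ℝ → (Fin n → ℝ) →L[ℝ] (Fin n → ℝ))
    (x : ℝ → Fin n → ℝ) (s t : ℝ) : Matrix (Fin n) (Fin n) ℝ :=
  LinearMap.toMatrix'
    (((if t < s then DF₀ (x t) t else DF₁ (x t) t) : (Fin n → ℝ) →L[ℝ] Fin n → ℝ) :
      (Fin n → ℝ) →ₗ[ℝ] Fin n → ℝ)

section Helpers

/-- Mean value inequality on a closed interval, needing differentiability only on the interior. -/
lemma mvt_abs_sub_le {f f' : ℝ → ℝ} {a b C : ℝ} (hab : a ≤ b)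
    (hfc : ContinuousOn f (Icc a b))
    (hd : ∀ t ∈ Ioo a b, HasDerivAt f (f' t) t)
    (hC : ∀ t ∈ Ioo a b, |f' t| ≤ C) : |f b - f a| ≤ C * (b - a) := by
  rcases eq_or_lt_of_le hab with rfl | h
  · simp
  obtain ⟨c, hc, hslope⟩ := exists_hasDerivAt_eq_slope f f' h hfc hd
  have hba : (0:ℝ) < b - a := by linarith
  have : f b - f a = f' c * (b - a) := by
    rw [hslope]; field_simp
  rw [this, abs_mul, abs_of_pos hba]
  exact mul_le_mul_of_nonneg_right (hC c hc) hba.le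

/-- Upgrade a derivative within `Icc 0 T` to a derivative within `Ici t` (for `t < T`). -/
lemma hasDerivWithinAt_Ici_of_Icc {E : Type*} [NormedAddCommGroup E] [NormedSpace ℝ E]
    {f : ℝ → E} {v : E} {T t : ℝ} (h0 : 0 ≤ t) (hT : t < T)
    (h : HasDerivWithinAt f v (Icc 0 T) t) : HasDerivWithinAt f v (Ici t) t := by
  apply h.mono_of_mem_nhdsWithin
  have h1 : Icc t T ∈ 𝓝[Ici t] t :=
    inter_mem_nhdsWithin _ (Iic_mem_nhds hT)
  exact mem_of_superset h1 (Icc_subset_Icc_left h0)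

/-- Coordinate derivative from a vector-valued derivative (interior upgrade). -/
lemma hasDerivAt_coord {n : ℕ} {f : ℝ → Fin n → ℝ} {v : Fin n → ℝ} {T t : ℝ}
    (ht : t ∈ Ioo 0 T) (h : HasDerivWithinAt f v (Icc 0 T) t) (i : Fin n) :
    HasDerivAt (fun τ => f τ i) (v i) t := by
  have h' : HasDerivAt f v t := h.hasDerivAt (Icc_mem_nhds ht.1 ht.2)
  exact ((ContinuousLinearMap.proj (R := ℝ) (φ := fun _ : Fin n => ℝ) i).hasFDerivAt).comp_hasDerivAt t h'

lemma vecMul_toMatrix'_dot {n : ℕ} (p w : Fin n → ℝ) (l : (Fin n → ℝ) →L[ℝ] (Fin n → ℝ)) :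
    ∑ i, Matrix.vecMul p (LinearMap.toMatrix' (l : (Fin n → ℝ) →ₗ[ℝ] Fin n → ℝ)) i * w i
      = ∑ i, p i * l w i := by
  have h1 : (LinearMap.toMatrix' (l : (Fin n → ℝ) →ₗ[ℝ] Fin n → ℝ)).mulVec w = l w := by
    rw [← Matrix.toLin'_apply, Matrix.toLin'_toMatrix']; rfl
  calc ∑ i, Matrix.vecMul p (LinearMap.toMatrix' (l : (Fin n → ℝ) →ₗ[ℝ] Fin n → ℝ)) i * w i
      = dotProduct (Matrix.vecMul p _) w := rfl
    _ = dotProduct p ((LinearMap.toMatrix' (l : (Fin n → ℝ) →ₗ[ℝ] Fin n → ℝ)).mulVec w) :=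
        (Matrix.dotProduct_mulVec _ _ _).symm
    _ = ∑ i, p i * l w i := by rw [h1]; rfl

lemma gprime_rewrite {n : ℕ} (p w u : Fin n → ℝ) (l : (Fin n → ℝ) →L[ℝ] (Fin n → ℝ)) :
    ∑ i, ((-(Matrix.vecMul p (LinearMap.toMatrix' (l : (Fin n → ℝ) →ₗ[ℝ] Fin n → ℝ)))) i * w i
      + p i * u i) = ∑ i, p i * (u i - l w i) := by
  have h := vecMul_toMatrix'_dot p w l
  calc ∑ i, ((-(Matrix.vecMul p (LinearMap.toMatrix' (l : (Fin n → ℝ) →ₗ[ℝ] Fin n → ℝ)))) i * w i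
        + p i * u i)
      = ∑ i, (p i * u i
          - Matrix.vecMul p (LinearMap.toMatrix' (l : (Fin n → ℝ) →ₗ[ℝ] Fin n → ℝ)) i * w i) := by
        apply Finset.sum_congr rfl
        intro i _
        simp only [Pi.neg_apply]
        ring
    _ = ∑ i, p i * u i
          - ∑ i, Matrix.vecMul p (LinearMap.toMatrix' (l : (Fin n → ℝ) →ₗ[ℝ] Fin n → ℝ)) i * w i :=
        Finset.sum_sub_distrib _ _
    _ = ∑ i, p i * u i - ∑ i, p i * l w i := by rw [h]
    _ = ∑ i, p i * (u i - l w i) := by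
        rw [← Finset.sum_sub_distrib]
        apply Finset.sum_congr rfl
        intro i _
        ring

lemma mul_le_of_le_div1 {a r q : ℝ} (ha : 0 ≤ a) (hq : 0 ≤ q) (hr : r ≤ q / (a + 1)) : a * r ≤ q := by
  calc a * r ≤ a * (q / (a + 1)) := mul_le_mul_of_nonneg_left hr ha
    _ = (a / (a + 1)) * q := by
        rw [mul_div_assoc', div_mul_eq_mul_div]
    _ ≤ 1 * q := mul_le_mul_of_nonneg_right ((div_le_one (by linarith)).mpr (by linarith)) hq
    _ = q := one_mul _

lemma dot_abs_le {n : ℕ} {u v : Fin n → ℝ} {Pu r : ℝ} (hu : ∀ i, |u i| ≤ Pu) (hv : ‖v‖ ≤ r) :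
    |∑ i, u i * v i| ≤ n * (Pu * r) := by
  calc |∑ i, u i * v i| ≤ ∑ i, |u i * v i| := Finset.abs_sum_le_sum_abs _ _
    _ ≤ ∑ _i : Fin n, Pu * r := by
        apply Finset.sum_le_sum
        intro i _
        rw [abs_mul]
        have hvi : |v i| ≤ r := le_trans (by simpa using norm_le_pi_norm v i) hv
        exact mul_le_mul (hu i) hvi (abs_nonneg _) (le_trans (abs_nonneg _) (hu i))
    _ = n * (Pu * r) := by simp [Finset.sum_const, mul_comm]
end Helpers

set_option maxHeartbeats 4000000 in
/-- Theorem 5.1: derivative of the objective with respect to the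
switch point equals the jump in the Hamiltonian at the switch point. -/


theorem objective_derivative_switch_point
    {n : ℕ} (hn : 0 < n) (T s ρ L : ℝ) (hT : 0 < T) (hs : s ∈ Ioo 0 T) (hρ : 0 < ρ)
    (I E : Finset (Fin n)) (hcard : I.card + E.card = n)
    (bI bE : Fin n → ℝ)
    (F₀ F₁ : (Fin n → ℝ) → ℝ → Fin n → ℝ)
    (DF₀ DF₁ : (Fin n → ℝ) → ℝ → (Fin n → ℝ) →L[ℝ] (Fin n → ℝ))
    (x : ℝ → Fin n → ℝ)
    -- `x` solves the boundary-value problem with switch point `s`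
    (hx : IsSwitchSol T s I E bI bE F₀ F₁ x)
    -- Dynamics Smoothness on the two tubes
    (hds₀ : DynSmooth n F₀ DF₀ x 0 (s + ρ) ρ L)
    (hds₁ : DynSmooth n F₁ DF₁ x (s - ρ) T ρ L)
    -- the objective `C` is continuously differentiable
    (C : (Fin n → ℝ) → ℝ) (hC : ContDiff ℝ 1 C)
    -- the fundamental matrix `Φ` of the linearized state dynamics along `x`,
    -- with `Φ_{EJ}(T)` invertible (`J = Iᶜ`)
    (Φ : ℝ → (Fin n → ℝ) →L[ℝ] (Fin n → ℝ))
    (hΦc : ContinuousOn Φ (Icc 0 T))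
    (hΦ0 : Φ 0 = ContinuousLinearMap.id ℝ (Fin n → ℝ))
    (hΦode : ∀ t ∈ Icc 0 T, t ≠ s → HasDerivWithinAt Φ
      ((if t < s then DF₀ (x t) t else DF₁ (x t) t).comp (Φ t)) (Icc 0 T) t)
    (N : Matrix {j // j ∈ Iᶜ} {e // e ∈ E} ℝ)
    (hN₁ : (LinearMap.toMatrix' (Φ T : (Fin n → ℝ) →ₗ[ℝ] Fin n → ℝ)).submatrix
        (Subtype.val : {e // e ∈ E} → Fin n) (Subtype.val : {j // j ∈ Iᶜ} → Fin n) * N = 1)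
    (hN₂ : N * (LinearMap.toMatrix' (Φ T : (Fin n → ℝ) →ₗ[ℝ] Fin n → ℝ)).submatrix
        (Subtype.val : {e // e ∈ E} → Fin n) (Subtype.val : {j // j ∈ Iᶜ} → Fin n) = 1)
    -- the fundamental matrix `Ψ` of the costate dynamics, `Ψ̇ = -∇ₓF(x(t),t)ᵀ Ψ`,
    -- with `Ψ_{FI}(T)` invertible (`F = Eᶜ`)
    (Ψ : ℝ → Matrix (Fin n) (Fin n) ℝ)
    (hΨc : ∀ i j, ContinuousOn (fun τ => Ψ τ i j) (Icc 0 T))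
    (hΨ0 : Ψ 0 = 1)
    (hΨode : ∀ t ∈ Icc 0 T, t ≠ s → ∀ i j, HasDerivWithinAt (fun τ => Ψ τ i j)
      ((-((jacMat DF₀ DF₁ x s t).transpose * Ψ t)) i j) (Icc 0 T) t)
    (M : Matrix {i // i ∈ I} {f // f ∈ Eᶜ} ℝ)
    (hM₁ : (Ψ T).submatrix
        (Subtype.val : {f // f ∈ Eᶜ} → Fin n) (Subtype.val : {i // i ∈ I} → Fin n) * M = 1)
    (hM₂ : M * (Ψ T).submatrix
        (Subtype.val : {f // f ∈ Eᶜ} → Fin n) (Subtype.val : {i // i ∈ I} → Fin n) = 1)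
    -- the costate `p`: `ṗ = -p ∇ₓF(x(t),t)` for `t ≠ s`, `p_F(T) = ∇_F C(x(T))`, `p_J(0) = 0`
    (p : ℝ → Fin n → ℝ)
    (hpc : ContinuousOn p (Icc 0 T))
    (hpode : ∀ t ∈ Icc 0 T, t ≠ s →
      HasDerivWithinAt p (-(Matrix.vecMul (p t) (jacMat DF₀ DF₁ x s t))) (Icc 0 T) t)
    (hpT : ∀ i ∈ Eᶜ, p T i = fderiv ℝ C (x T) (Pi.single i 1))
    (hp0 : ∀ j ∈ Iᶜ, p 0 j = 0)
    -- for each sufficiently small `Δs`, `xp Δs` is a solution of the boundary-value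
    -- problem with switch point `s + Δs`, with `‖xp Δs _J(0) - x_J(0)‖ ≤ c|Δs|`
    (xp : ℝ → ℝ → Fin n → ℝ) (c η : ℝ) (hη : 0 < η)
    (hxp : ∀ Δs : ℝ, |Δs| ≤ η →
      IsSwitchSol T (s + Δs) I E bI bE F₀ F₁ (xp Δs) ∧
      ‖(fun j : {j // j ∈ Iᶜ} => xp Δs 0 j.1 - x 0 j.1)‖ ≤ c * |Δs|) :
    -- the difference quotient of the objective converges, as `Δs → 0`, to
    -- `H₀(x(s),p(s),s) - H₁(x(s),p(s),s) = p(s)⬝[F₀(x(s),s) - F₁(x(s),s)]`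
    Tendsto (fun Δs : ℝ => (C (xp Δs T) - C (x T)) / Δs) (𝓝[≠] (0 : ℝ))
      (𝓝 (∑ j, p s j * (F₀ (x s) s j - F₁ (x s) s j))) := by
  classical
  obtain ⟨hs0, hsT⟩ := hs
  have hxc : ContinuousOn x (Icc 0 T) := hx.1
  set b₀ : ℝ := min (s + ρ) T with hb₀def
  set a₁ : ℝ := max (s - ρ) 0 with ha₁def
  have hb₀T : b₀ ≤ T := min_le_right _ _
  have hsb₀ : s ≤ b₀ := le_min (by linarith) hsT.le
  have h0a₁ : 0 ≤ a₁ := le_max_right _ _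
  have ha₁s : a₁ ≤ s := max_le (by linarith) hs0.le
  set tube₀ : Set ((Fin n → ℝ) × ℝ) := {q | q.2 ∈ Icc 0 b₀ ∧ ‖q.1 - x q.2‖ ≤ ρ} with htube₀def
  set tube₁ : Set ((Fin n → ℝ) × ℝ) := {q | q.2 ∈ Icc a₁ T ∧ ‖q.1 - x q.2‖ ≤ ρ} with htube₁def
  -- compactness of the tubes
  have hcomp : ∀ (a b : ℝ), 0 ≤ a → b ≤ T →
      IsCompact {q : (Fin n → ℝ) × ℝ | q.2 ∈ Icc a b ∧ ‖q.1 - x q.2‖ ≤ ρ} := by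
    intro a b ha hb
    have h1 : IsCompact ((closedBall (0 : Fin n → ℝ) ρ) ×ˢ Icc a b) :=
      (isCompact_closedBall _ _).prod isCompact_Icc
    have h2 : ContinuousOn (fun q : (Fin n → ℝ) × ℝ => (q.1 + x q.2, q.2))
        ((closedBall (0 : Fin n → ℝ) ρ) ×ˢ Icc a b) := by
      apply ContinuousOn.prodMk
      · exact continuousOn_fst.add (hxc.comp continuousOn_snd
          (fun q hq => Icc_subset_Icc ha hb hq.2))
      · exact continuousOn_snd
    have h3 := h1.image_of_continuousOn h2
    have h4 : (fun q : (Fin n → ℝ) × ℝ => (q.1 + x q.2, q.2)) ''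
        ((closedBall (0 : Fin n → ℝ) ρ) ×ˢ Icc a b)
        = {q : (Fin n → ℝ) × ℝ | q.2 ∈ Icc a b ∧ ‖q.1 - x q.2‖ ≤ ρ} := by
      ext q
      constructor
      · rintro ⟨⟨v, t⟩, ⟨hv, ht⟩, rfl⟩
        refine ⟨ht, ?_⟩
        simpa [dist_zero_right] using (mem_closedBall.mp hv)
      · rintro ⟨hq1, hq2⟩
        exact ⟨(q.1 - x q.2, q.2), ⟨by simpa [dist_zero_right] using hq2, hq1⟩, by simp⟩
    rwa [h4] at h3
  have hcomp₀ : IsCompact tube₀ := hcomp 0 b₀ le_rfl hb₀T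
  have hcomp₁ : IsCompact tube₁ := hcomp a₁ T h0a₁ le_rfl
  have hsub₀ : tube₀ ⊆ {q : (Fin n → ℝ) × ℝ | q.2 ∈ Icc 0 (s + ρ) ∧ ‖q.1 - x q.2‖ ≤ ρ} :=
    fun q hq => ⟨Icc_subset_Icc_right (min_le_left _ _) hq.1, hq.2⟩
  have hsub₁ : tube₁ ⊆ {q : (Fin n → ℝ) × ℝ | q.2 ∈ Icc (s - ρ) T ∧ ‖q.1 - x q.2‖ ≤ ρ} :=
    fun q hq => ⟨Icc_subset_Icc_left (le_max_left _ _) hq.1, hq.2⟩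
  obtain ⟨B₀, hB₀⟩ := hcomp₀.exists_bound_of_continuousOn (hds₀.contDiffOn.continuousOn.mono hsub₀)
  obtain ⟨B₁, hB₁⟩ := hcomp₁.exists_bound_of_continuousOn (hds₁.contDiffOn.continuousOn.mono hsub₁)
  obtain ⟨K₀, hK₀⟩ := hcomp₀.exists_bound_of_continuousOn (hds₀.contDeriv.mono hsub₀)
  obtain ⟨K₁, hK₁⟩ := hcomp₁.exists_bound_of_continuousOn (hds₁.contDeriv.mono hsub₁)
  obtain ⟨P₀, hP₀⟩ := isCompact_Icc.exists_bound_of_continuousOn hpc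
  set B : ℝ := max (max B₀ B₁) 0 with hBdef
  set K : ℝ := max (max K₀ K₁) 0 with hKdef
  set P : ℝ := max P₀ 0 with hPdef
  set L' : ℝ := max L 0 with hL'def
  have hB0 : 0 ≤ B := le_max_right _ _
  have hK0 : 0 ≤ K := le_max_right _ _
  have hP0 : 0 ≤ P := le_max_right _ _
  have hL'0 : 0 ≤ L' := le_max_right _ _
  have hLL' : L ≤ L' := le_max_left _ _
  have hFB₀ : ∀ χ t, (χ, t) ∈ tube₀ → ‖F₀ χ t‖ ≤ B :=
    fun χ t h => le_trans (hB₀ (χ, t) h) (le_trans (le_max_left _ _) (le_max_left _ _))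
  have hFB₁ : ∀ χ t, (χ, t) ∈ tube₁ → ‖F₁ χ t‖ ≤ B :=
    fun χ t h => le_trans (hB₁ (χ, t) h) (le_trans (le_max_right _ _) (le_max_left _ _))
  have hDK₀ : ∀ χ t, (χ, t) ∈ tube₀ → ‖DF₀ χ t‖ ≤ K :=
    fun χ t h => le_trans (hK₀ (χ, t) h) (le_trans (le_max_left _ _) (le_max_left _ _))
  have hDK₁ : ∀ χ t, (χ, t) ∈ tube₁ → ‖DF₁ χ t‖ ≤ K :=
    fun χ t h => le_trans (hK₁ (χ, t) h) (le_trans (le_max_right _ _) (le_max_left _ _))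
  have hpP : ∀ t ∈ Icc 0 T, ∀ i, |p t i| ≤ P := by
    intro t ht i
    have := norm_le_pi_norm (p t) i
    have h2 := hP₀ t ht
    simp only [Real.norm_eq_abs] at this
    exact le_trans this (le_trans h2 (le_max_left _ _))
  have hxtube₀ : ∀ t ∈ Icc 0 b₀, (x t, t) ∈ tube₀ := by
    intro t ht; exact ⟨ht, by simp [hρ.le]⟩
  have hxtube₁ : ∀ t ∈ Icc a₁ T, (x t, t) ∈ tube₁ := by
    intro t ht; exact ⟨ht, by simp [hρ.le]⟩
  -- Lipschitz estimates on the tubes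
  have lip₀ : ∀ t ∈ Icc 0 b₀, ∀ χ₁ χ₂ : Fin n → ℝ, ‖χ₁ - x t‖ ≤ ρ → ‖χ₂ - x t‖ ≤ ρ →
      ‖F₀ χ₁ t - F₀ χ₂ t‖ ≤ K * ‖χ₁ - χ₂‖ := by
    intro t ht χ₁ χ₂ h₁ h₂
    have ht' : t ∈ Icc 0 (s + ρ) := Icc_subset_Icc_right (min_le_left _ _) ht
    refine Convex.norm_image_sub_le_of_norm_hasFDerivWithin_le (f := fun y => F₀ y t)
      (f' := fun χ => DF₀ χ t) (s := closedBall (x t) ρ) ?_ ?_ (convex_closedBall _ _) ?_ ?_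
    · intro y hy
      rw [mem_closedBall, dist_eq_norm] at hy
      exact (hds₀.hasFDeriv y t ht' hy).hasFDerivWithinAt
    · intro y hy
      rw [mem_closedBall, dist_eq_norm] at hy
      exact hDK₀ y t ⟨ht, hy⟩
    · rw [mem_closedBall, dist_eq_norm]; exact h₂
    · rw [mem_closedBall, dist_eq_norm]; exact h₁
  have lip₁ : ∀ t ∈ Icc a₁ T, ∀ χ₁ χ₂ : Fin n → ℝ, ‖χ₁ - x t‖ ≤ ρ → ‖χ₂ - x t‖ ≤ ρ →
      ‖F₁ χ₁ t - F₁ χ₂ t‖ ≤ K * ‖χ₁ - χ₂‖ := by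
    intro t ht χ₁ χ₂ h₁ h₂
    have ht' : t ∈ Icc (s - ρ) T := Icc_subset_Icc_left (le_max_left _ _) ht
    refine Convex.norm_image_sub_le_of_norm_hasFDerivWithin_le (f := fun y => F₁ y t)
      (f' := fun χ => DF₁ χ t) (s := closedBall (x t) ρ) ?_ ?_ (convex_closedBall _ _) ?_ ?_
    · intro y hy
      rw [mem_closedBall, dist_eq_norm] at hy
      exact (hds₁.hasFDeriv y t ht' hy).hasFDerivWithinAt
    · intro y hy
      rw [mem_closedBall, dist_eq_norm] at hy
      exact hDK₁ y t ⟨ht, hy⟩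
    · rw [mem_closedBall, dist_eq_norm]; exact h₂
    · rw [mem_closedBall, dist_eq_norm]; exact h₁
  -- Taylor estimates on the tubes
  have tay₀ : ∀ t ∈ Icc 0 b₀, ∀ χ : Fin n → ℝ, ‖χ - x t‖ ≤ ρ →
      ‖F₀ χ t - F₀ (x t) t - DF₀ (x t) t (χ - x t)‖ ≤ L' * (‖χ - x t‖ * ‖χ - x t‖) := by
    intro t ht χ hχ
    have ht' : t ∈ Icc 0 (s + ρ) := Icc_subset_Icc_right (min_le_left _ _) ht
    have h := Convex.norm_image_sub_le_of_norm_hasFDerivWithin_le' (f := fun y => F₀ y t)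
      (f' := fun χ => DF₀ χ t) (φ := DF₀ (x t) t) (s := closedBall (x t) ‖χ - x t‖) (y := χ)
      (C := L' * ‖χ - x t‖) ?_ ?_ (convex_closedBall _ _)
      (mem_closedBall_self (norm_nonneg _)) ?_
    · calc ‖F₀ χ t - F₀ (x t) t - DF₀ (x t) t (χ - x t)‖ ≤ L' * ‖χ - x t‖ * ‖χ - x t‖ := h
        _ = L' * (‖χ - x t‖ * ‖χ - x t‖) := by ring
    · intro y hy
      rw [mem_closedBall, dist_eq_norm] at hy
      exact (hds₀.hasFDeriv y t ht' (le_trans hy hχ)).hasFDerivWithinAt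
    · intro y hy
      rw [mem_closedBall, dist_eq_norm] at hy
      have := hds₀.lip t y (x t) ht' (le_trans hy hχ) (by simp [hρ.le])
      calc ‖DF₀ y t - DF₀ (x t) t‖ ≤ L * ‖y - x t‖ := by simpa using this
        _ ≤ L' * ‖χ - x t‖ := by
            calc L * ‖y - x t‖ ≤ L' * ‖y - x t‖ :=
                  mul_le_mul_of_nonneg_right hLL' (norm_nonneg _)
              _ ≤ L' * ‖χ - x t‖ := mul_le_mul_of_nonneg_left hy hL'0
    · rw [mem_closedBall, dist_eq_norm]
  have tay₁ : ∀ t ∈ Icc a₁ T, ∀ χ : Fin n → ℝ, ‖χ - x t‖ ≤ ρ →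
      ‖F₁ χ t - F₁ (x t) t - DF₁ (x t) t (χ - x t)‖ ≤ L' * (‖χ - x t‖ * ‖χ - x t‖) := by
    intro t ht χ hχ
    have ht' : t ∈ Icc (s - ρ) T := Icc_subset_Icc_left (le_max_left _ _) ht
    have h := Convex.norm_image_sub_le_of_norm_hasFDerivWithin_le' (f := fun y => F₁ y t)
      (f' := fun χ => DF₁ χ t) (φ := DF₁ (x t) t) (s := closedBall (x t) ‖χ - x t‖) (y := χ)
      (C := L' * ‖χ - x t‖) ?_ ?_ (convex_closedBall _ _)
      (mem_closedBall_self (norm_nonneg _)) ?_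
    · calc ‖F₁ χ t - F₁ (x t) t - DF₁ (x t) t (χ - x t)‖ ≤ L' * ‖χ - x t‖ * ‖χ - x t‖ := h
        _ = L' * (‖χ - x t‖ * ‖χ - x t‖) := by ring
    · intro y hy
      rw [mem_closedBall, dist_eq_norm] at hy
      exact (hds₁.hasFDeriv y t ht' (le_trans hy hχ)).hasFDerivWithinAt
    · intro y hy
      rw [mem_closedBall, dist_eq_norm] at hy
      have := hds₁.lip t y (x t) ht' (le_trans hy hχ) (by simp [hρ.le])
      calc ‖DF₁ y t - DF₁ (x t) t‖ ≤ L * ‖y - x t‖ := by simpa using this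
        _ ≤ L' * ‖χ - x t‖ := by
            calc L * ‖y - x t‖ ≤ L' * ‖y - x t‖ :=
                  mul_le_mul_of_nonneg_right hLL' (norm_nonneg _)
              _ ≤ L' * ‖χ - x t‖ := mul_le_mul_of_nonneg_left hy hL'0
    · rw [mem_closedBall, dist_eq_norm]
  -- nonnegativity of c
  have hc0 : 0 ≤ c := by
    have h := (hxp η (by rw [abs_of_pos hη])).2
    have h2 := le_trans (norm_nonneg _) h
    rw [abs_of_pos hη] at h2
    exact (mul_nonneg_iff_of_pos_right hη).mp h2
  have hd0 : ∀ Δs : ℝ, |Δs| ≤ η → ‖xp Δs 0 - x 0‖ ≤ c * |Δs| := by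
    intro Δs hle
    have h := (hxp Δs hle).2
    have hx0I := hx.2.2.2.1
    have hxp0I := (hxp Δs hle).1.2.2.2.1
    rw [pi_norm_le_iff_of_nonneg (mul_nonneg hc0 (abs_nonneg _))]
    intro i
    by_cases hi : i ∈ I
    · have : xp Δs 0 i - x 0 i = 0 := by rw [hx0I i hi, hxp0I i hi]; ring
      simp only [Pi.sub_apply, this, norm_zero]
      positivity
    · have hi' : i ∈ Iᶜ := Finset.mem_compl.mpr hi
      have h2 := norm_le_pi_norm (fun j : {j // j ∈ Iᶜ} => xp Δs 0 j.1 - x 0 j.1) ⟨i, hi'⟩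
      exact le_trans h2 h
  set c₂ : ℝ := (c * Real.exp (K * T) + 2 * B) * Real.exp (K * T) with hc₂def
  have hexp1 : (1 : ℝ) ≤ Real.exp (K * T) := Real.one_le_exp (mul_nonneg hK0 hT.le)
  have hexppos := Real.exp_pos (K * T)
  have hc₂0 : 0 ≤ c₂ := by
    apply mul_nonneg _ hexppos.le
    have := mul_nonneg hc0 hexppos.le
    linarith
  have hcenn : 0 ≤ c * Real.exp (K * T) + 2 * B := by
    have := mul_nonneg hc0 hexppos.le
    linarith
  have hce2c₂ : c * Real.exp (K * T) + 2 * B ≤ c₂ := by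
    rw [hc₂def]
    exact le_mul_of_one_le_right hcenn hexp1
  have hcec₂ : c * Real.exp (K * T) ≤ c₂ := by linarith
  have hcc₂ : c ≤ c₂ := by
    have h1 : c ≤ c * Real.exp (K * T) := le_mul_of_one_le_right hc0 hexp1
    linarith
  set δ₁ : ℝ := min (min s (T - s)) (min (min ρ η) (ρ / (2 * (c₂ + 1)))) with hδ₁def
  have hδ₁pos : 0 < δ₁ :=
    lt_min (lt_min hs0 (by linarith)) (lt_min (lt_min hρ hη) (by positivity))
  have hδ₁s : δ₁ ≤ s := le_trans (min_le_left _ _) (min_le_left _ _)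
  have hδ₁Ts : δ₁ ≤ T - s := le_trans (min_le_left _ _) (min_le_right _ _)
  have hδ₁ρ : δ₁ ≤ ρ := le_trans (min_le_right _ _) (le_trans (min_le_left _ _) (min_le_left _ _))
  have hδ₁η : δ₁ ≤ η := le_trans (min_le_right _ _) (le_trans (min_le_left _ _) (min_le_right _ _))
  have hδ₁ρ2 : δ₁ ≤ ρ / (2 * (c₂ + 1)) := le_trans (min_le_right _ _) (min_le_right _ _)
  have hc₂ρ : ∀ Δs : ℝ, |Δs| ≤ δ₁ → c₂ * |Δs| ≤ ρ / 2 := by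
    intro Δs h
    have h2 : |Δs| ≤ ρ / (2 * (c₂ + 1)) := le_trans h hδ₁ρ2
    have h3 : c₂ * (ρ / (2 * (c₂ + 1))) = (c₂ / (c₂ + 1)) * (ρ / 2) := by
      rw [div_mul_div_comm, mul_div_assoc]
      congr 1
      rw [mul_comm (c₂ + 1) 2]
    have h4 : c₂ / (c₂ + 1) ≤ 1 := by
      rw [div_le_one (by linarith)]
      linarith
    calc c₂ * |Δs| ≤ c₂ * (ρ / (2 * (c₂ + 1))) := mul_le_mul_of_nonneg_left h2 hc₂0
      _ = (c₂ / (c₂ + 1)) * (ρ / 2) := h3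
      _ ≤ 1 * (ρ / 2) := mul_le_mul_of_nonneg_right h4 (by linarith)
      _ = ρ / 2 := one_mul _
  -- Stability: the perturbed solution stays `c₂|Δs|`-close to `x`
  have STAB : ∀ Δs : ℝ, |Δs| ≤ δ₁ → ∀ t ∈ Icc 0 T, ‖xp Δs t - x t‖ ≤ c₂ * |Δs| := by
    intro Δs hΔ
    have hΔη : |Δs| ≤ η := le_trans hΔ hδ₁η
    obtain ⟨⟨hxpc, hxpd₀, hxpd₁, hxp0, hxpT⟩, hxpJ⟩ := hxp Δs hΔη
    obtain ⟨hι₁, hι₂⟩ := abs_le.mp (le_refl |Δs|)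
    have hΔs : |Δs| ≤ s := le_trans hΔ hδ₁s
    have hΔTs : |Δs| ≤ T - s := le_trans hΔ hδ₁Ts
    have hΔρ : |Δs| ≤ ρ := le_trans hΔ hδ₁ρ
    set m : ℝ := min s (s + Δs) with hmdef
    set M : ℝ := max s (s + Δs) with hMdef
    have hm0 : 0 ≤ m := le_min hs0.le (by linarith)
    have hMT : M ≤ T := max_le hsT.le (by linarith)
    have hms : m ≤ s := min_le_left _ _
    have hsM : s ≤ M := le_max_left _ _
    have hmM : m ≤ M := le_trans hms hsM
    have hmΔ : m ≤ s + Δs := min_le_right _ _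
    have hΔM : s + Δs ≤ M := le_max_right _ _
    have hMm : M - m = |Δs| := by
      rcases le_total 0 Δs with h | h
      · rw [hmdef, hMdef, min_eq_left (by linarith), max_eq_right (by linarith),
          abs_of_nonneg h]; ring
      · rw [hmdef, hMdef, min_eq_right (by linarith), max_eq_left (by linarith),
          abs_of_nonpos h]; ring
    have hMb₀ : M ≤ b₀ := le_min (max_le (by linarith) (by linarith)) hMT
    have ha₁m : a₁ ≤ m := max_le (le_min (by linarith) (by linarith)) hm0
    have hdc : ContinuousOn (fun τ => xp Δs τ - x τ) (Icc 0 T) := hxpc.sub hxc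
    have habel : ∀ u v : ℝ, ∀ f : ℝ → Fin n → ℝ, ‖f u‖ ≤ ‖f v‖ + ‖f u - f v‖ := by
      intro u v f
      calc ‖f u‖ = ‖f v + (f u - f v)‖ := by congr 1; abel
        _ ≤ ‖f v‖ + ‖f u - f v‖ := norm_add_le _ _
    have KEY : ∀ t ∈ Icc 0 T, (∀ τ ∈ Icc 0 t, ‖xp Δs τ - x τ‖ ≤ ρ) →
        ∀ τ ∈ Icc 0 t, ‖xp Δs τ - x τ‖ ≤ c₂ * |Δs| := by
      intro t ht htube
      have KEY1 : ∀ τ ∈ Icc 0 t, τ ≤ m →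
          ‖xp Δs τ - x τ‖ ≤ c * |Δs| * Real.exp (K * T) := by
        intro τ hτ hτm
        have hτT : τ ≤ T := le_trans hτ.2 ht.2
        have h := norm_le_gronwallBound_of_norm_deriv_right_le
          (f := fun τ' => xp Δs τ' - x τ') (f' := fun τ' => F₀ (xp Δs τ') τ' - F₀ (x τ') τ')
          (δ := c * |Δs|) (K := K) (ε := 0) (a := 0) (b := τ)
          (hdc.mono (Icc_subset_Icc le_rfl hτT))
          (by
            intro τ' hτ'
            have hτ's : τ' < s := lt_of_lt_of_le hτ'.2 (le_trans hτm hms)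
            have hτ'T : τ' < T := lt_trans hτ's hsT
            have h1 : HasDerivWithinAt x (F₀ (x τ') τ') (Icc 0 T) τ' :=
              hx.2.1 τ' ⟨hτ'.1, hτ's⟩
            have h2 : HasDerivWithinAt (xp Δs) (F₀ (xp Δs τ') τ') (Icc 0 T) τ' :=
              hxpd₀ τ' ⟨hτ'.1, lt_of_lt_of_le hτ'.2 (le_trans hτm hmΔ)⟩
            exact hasDerivWithinAt_Ici_of_Icc hτ'.1 hτ'T (h2.sub h1))
          (hd0 Δs hΔη)
          (by
            intro τ' hτ'
            rw [add_zero]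
            exact lip₀ τ' ⟨hτ'.1, le_trans hτ'.2.le (le_trans hτm (le_trans hms hsb₀))⟩ _ _
              (htube τ' ⟨hτ'.1, le_trans hτ'.2.le hτ.2⟩) (by simp [hρ.le]))
          τ ⟨hτ.1, le_rfl⟩
        rw [sub_zero, gronwallBound_ε0] at h
        refine le_trans h ?_
        have : Real.exp (K * τ) ≤ Real.exp (K * T) :=
          Real.exp_le_exp.mpr (mul_le_mul_of_nonneg_left hτT hK0)
        exact mul_le_mul_of_nonneg_left this (mul_nonneg hc0 (abs_nonneg _))
      have KEY2 : ∀ τ ∈ Icc 0 t, m ≤ τ → τ ≤ M →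
          ‖xp Δs τ - x τ‖ ≤ (c * Real.exp (K * T) + 2 * B) * |Δs| := by
        intro τ hτ hmτ hτM
        have hm_t : m ∈ Icc 0 t := ⟨hm0, le_trans hmτ hτ.2⟩
        have h1 := KEY1 m hm_t le_rfl
        have h2 : ‖(fun τ' => xp Δs τ' - x τ') τ - (fun τ' => xp Δs τ' - x τ') m‖
            ≤ 2 * B * (τ - m) := by
          rw [pi_norm_le_iff_of_nonneg (mul_nonneg (by linarith) (by linarith))]
          intro i
          have hcont : ContinuousOn (fun τ' => xp Δs τ' i - x τ' i) (Icc m τ) := by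
            have := ((continuous_apply i).comp_continuousOn hdc).mono
              (Icc_subset_Icc hm0 (le_trans hτ.2 ht.2))
            exact this
          have hmvt := mvt_abs_sub_le (f := fun τ' => xp Δs τ' i - x τ' i)
            (f' := fun τ' => (if 0 ≤ Δs then F₀ (xp Δs τ') τ' i - F₁ (x τ') τ' i
              else F₁ (xp Δs τ') τ' i - F₀ (x τ') τ' i)) (C := 2 * B) hmτ hcont
            (by
              intro τ' hτ'
              have hτ'M : τ' < M := lt_of_lt_of_le hτ'.2 hτM
              have hτ'0 : 0 < τ' := lt_of_le_of_lt hm0 hτ'.1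
              have hτ'T : τ' < T := lt_of_lt_of_le hτ'M hMT
              rcases le_or_gt 0 Δs with hsgn | hsgn
              · simp only [if_pos hsgn]
                have hmeq : m = s := by rw [hmdef, min_eq_left (by linarith)]
                have hMeq : M = s + Δs := by rw [hMdef, max_eq_right (by linarith)]
                have hdx : HasDerivWithinAt x (F₁ (x τ') τ') (Icc 0 T) τ' :=
                  hx.2.2.1 τ' ⟨hmeq ▸ hτ'.1, hτ'T.le⟩
                have hdxp : HasDerivWithinAt (xp Δs) (F₀ (xp Δs τ') τ') (Icc 0 T) τ' :=
                  hxpd₀ τ' ⟨hτ'0.le, hMeq ▸ hτ'M⟩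
                exact hasDerivAt_coord ⟨hτ'0, hτ'T⟩ (hdxp.sub hdx) i
              · simp only [if_neg (not_le.mpr hsgn)]
                have hmeq : m = s + Δs := by rw [hmdef, min_eq_right (by linarith)]
                have hMeq : M = s := by rw [hMdef, max_eq_left (by linarith)]
                have hdx : HasDerivWithinAt x (F₀ (x τ') τ') (Icc 0 T) τ' :=
                  hx.2.1 τ' ⟨hτ'0.le, hMeq ▸ hτ'M⟩
                have hdxp : HasDerivWithinAt (xp Δs) (F₁ (xp Δs τ') τ') (Icc 0 T) τ' :=
                  hxpd₁ τ' ⟨hmeq ▸ hτ'.1, hτ'T.le⟩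
                exact hasDerivAt_coord ⟨hτ'0, hτ'T⟩ (hdxp.sub hdx) i)
            (by
              intro τ' hτ'
              have hτ'M : τ' ≤ M := le_trans hτ'.2.le hτM
              have hτ'0 : 0 ≤ τ' := le_trans hm0 hτ'.1.le
              have hτ'T : τ' ≤ T := le_trans hτ'M hMT
              have hxpt₀ : (xp Δs τ', τ') ∈ tube₀ :=
                ⟨⟨hτ'0, le_trans hτ'M hMb₀⟩, htube τ' ⟨hτ'0, le_trans hτ'.2.le hτ.2⟩⟩
              have hxpt₁ : (xp Δs τ', τ') ∈ tube₁ :=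
                ⟨⟨le_trans ha₁m hτ'.1.le, hτ'T⟩, htube τ' ⟨hτ'0, le_trans hτ'.2.le hτ.2⟩⟩
              have hxt₀ : (x τ', τ') ∈ tube₀ := hxtube₀ τ' ⟨hτ'0, le_trans hτ'M hMb₀⟩
              have hxt₁ : (x τ', τ') ∈ tube₁ := hxtube₁ τ' ⟨le_trans ha₁m hτ'.1.le, hτ'T⟩
              have hb : ∀ u v : Fin n → ℝ, ‖u‖ ≤ B → ‖v‖ ≤ B → |u i - v i| ≤ 2 * B := by
                intro u v hu hv
                have h1 : |u i| ≤ B := le_trans (by simpa using norm_le_pi_norm u i) hu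
                have h2 : |v i| ≤ B := le_trans (by simpa using norm_le_pi_norm v i) hv
                calc |u i - v i| ≤ |u i| + |v i| := abs_sub _ _
                  _ ≤ 2 * B := by linarith
              rcases le_or_gt 0 Δs with hsgn | hsgn
              · simp only [if_pos hsgn]
                exact hb _ _ (hFB₀ _ _ hxpt₀) (hFB₁ _ _ hxt₁)
              · simp only [if_neg (not_le.mpr hsgn)]
                exact hb _ _ (hFB₁ _ _ hxpt₁) (hFB₀ _ _ hxt₀))
          simpa using hmvt
        have h3 := habel τ m (fun τ' => xp Δs τ' - x τ')
        have h4 : τ - m ≤ |Δs| := by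
          have : τ - m ≤ M - m := by linarith
          linarith [hMm ▸ this]
        have h5 : 2 * B * (τ - m) ≤ 2 * B * |Δs| := mul_le_mul_of_nonneg_left h4 (by linarith)
        calc ‖xp Δs τ - x τ‖ ≤ ‖xp Δs m - x m‖
              + ‖(fun τ' => xp Δs τ' - x τ') τ - (fun τ' => xp Δs τ' - x τ') m‖ := h3
          _ ≤ c * |Δs| * Real.exp (K * T) + 2 * B * |Δs| := by linarith
          _ = (c * Real.exp (K * T) + 2 * B) * |Δs| := by ring
      have KEY3 : ∀ τ ∈ Icc 0 t, M ≤ τ → ‖xp Δs τ - x τ‖ ≤ c₂ * |Δs| := by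
        intro τ hτ hMτ
        have hM_t : M ∈ Icc 0 t := ⟨le_trans hm0 hmM, le_trans hMτ hτ.2⟩
        have hdM := KEY2 M hM_t hmM le_rfl
        rcases eq_or_lt_of_le hMτ with heq | hlt
        · exact le_trans (heq ▸ hdM) (mul_le_mul_of_nonneg_right hce2c₂ (abs_nonneg _))
        · refine le_of_forall_pos_le_add ?_
          intro ε' hε'
          set ε'' := ε' / Real.exp (K * T) with hε''def
          have hε''pos : 0 < ε'' := div_pos hε' hexppos
          have hM0T : M ∈ Icc (0:ℝ) T := ⟨le_trans hm0 hmM, hMT⟩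
          have hcontM : ContinuousWithinAt (fun τ' => xp Δs τ' - x τ') (Icc 0 T) M :=
            hdc M hM0T
          rw [Metric.continuousWithinAt_iff] at hcontM
          obtain ⟨δ', hδ'pos, hδ'⟩ := hcontM ε'' hε''pos
          set M' := min (M + δ' / 2) τ with hM'def
          have hMM' : M < M' := lt_min (by linarith) hlt
          have hM'τ : M' ≤ τ := min_le_right _ _
          have hτT : τ ≤ T := le_trans hτ.2 ht.2
          have hM'T : M' ∈ Icc (0:ℝ) T :=
            ⟨le_trans hM0T.1 hMM'.le, le_trans hM'τ hτT⟩
          have hdistM' : dist M' M < δ' := by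
            rw [Real.dist_eq, abs_of_nonneg (by linarith)]
            have h5 : M' ≤ M + δ' / 2 := min_le_left _ _
            linarith
          have hdM' : ‖xp Δs M' - x M'‖ ≤ (c * Real.exp (K * T) + 2 * B) * |Δs| + ε'' := by
            have h := hδ' hM'T hdistM'
            rw [dist_eq_norm] at h
            have h6 := habel M' M (fun τ' => xp Δs τ' - x τ')
            have h7 : ‖(fun τ' => xp Δs τ' - x τ') M' - (fun τ' => xp Δs τ' - x τ') M‖ ≤ ε'' := by
              have : (fun τ' => xp Δs τ' - x τ') M' - (fun τ' => xp Δs τ' - x τ') M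
                  = (xp Δs M' - x M') - (xp Δs M - x M) := rfl
              rw [this]; exact h.le
            calc ‖xp Δs M' - x M'‖ ≤ ‖xp Δs M - x M‖
                  + ‖(fun τ' => xp Δs τ' - x τ') M' - (fun τ' => xp Δs τ' - x τ') M‖ := h6
              _ ≤ (c * Real.exp (K * T) + 2 * B) * |Δs| + ε'' := by linarith
          have h := norm_le_gronwallBound_of_norm_deriv_right_le
            (f := fun τ' => xp Δs τ' - x τ') (f' := fun τ' => F₁ (xp Δs τ') τ' - F₁ (x τ') τ')
            (δ := (c * Real.exp (K * T) + 2 * B) * |Δs| + ε'') (K := K) (ε := 0)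
            (a := M') (b := τ)
            (hdc.mono (Icc_subset_Icc hM'T.1 hτT))
            (by
              intro τ' hτ'
              have hsτ' : s < τ' := lt_of_le_of_lt hsM (lt_of_lt_of_le hMM' hτ'.1)
              have hτ'T : τ' < T := lt_of_lt_of_le hτ'.2 hτT
              have h1 : HasDerivWithinAt x (F₁ (x τ') τ') (Icc 0 T) τ' :=
                hx.2.2.1 τ' ⟨hsτ', hτ'T.le⟩
              have h2 : HasDerivWithinAt (xp Δs) (F₁ (xp Δs τ') τ') (Icc 0 T) τ' :=
                hxpd₁ τ' ⟨lt_of_le_of_lt hΔM (lt_of_lt_of_le hMM' hτ'.1), hτ'T.le⟩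
              exact hasDerivWithinAt_Ici_of_Icc (le_trans hM'T.1 hτ'.1) hτ'T (h2.sub h1))
            hdM'
            (by
              intro τ' hτ'
              rw [add_zero]
              have hτ'0 : 0 ≤ τ' := le_trans hM'T.1 hτ'.1
              exact lip₁ τ' ⟨le_trans ha₁m (le_trans hmM (le_trans hMM'.le hτ'.1)),
                  le_trans hτ'.2.le hτT⟩ _ _
                (htube τ' ⟨hτ'0, le_trans hτ'.2.le hτ.2⟩) (by simp [hρ.le]))
            τ ⟨hM'τ, le_rfl⟩
          rw [gronwallBound_ε0] at h
          have hδnn : 0 ≤ (c * Real.exp (K * T) + 2 * B) * |Δs| + ε'' := by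
            have := mul_nonneg hcenn (abs_nonneg Δs)
            linarith
          have hexple : Real.exp (K * (τ - M')) ≤ Real.exp (K * T) := by
            apply Real.exp_le_exp.mpr
            apply mul_le_mul_of_nonneg_left _ hK0
            have := hM'T.1
            linarith
          calc ‖xp Δs τ - x τ‖
              ≤ ((c * Real.exp (K * T) + 2 * B) * |Δs| + ε'') * Real.exp (K * (τ - M')) := h
            _ ≤ ((c * Real.exp (K * T) + 2 * B) * |Δs| + ε'') * Real.exp (K * T) :=
                mul_le_mul_of_nonneg_left hexple hδnn
            _ = c₂ * |Δs| + ε'' * Real.exp (K * T) := by rw [hc₂def]; ring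
            _ = c₂ * |Δs| + ε' := by
                rw [hε''def, div_mul_cancel₀]
                exact ne_of_gt hexppos
      intro τ hτ
      rcases le_total τ m with h | h
      · refine le_trans (KEY1 τ hτ h) ?_
        have heq : c * |Δs| * Real.exp (K * T) = c * Real.exp (K * T) * |Δs| := by ring
        rw [heq]
        exact mul_le_mul_of_nonneg_right hcec₂ (abs_nonneg _)
      rcases le_total τ M with h2 | h2
      · exact le_trans (KEY2 τ hτ h h2) (mul_le_mul_of_nonneg_right hce2c₂ (abs_nonneg _))
      · exact KEY3 τ hτ h2
    -- bootstrap
    have hcρ : c * |Δs| ≤ ρ := by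
      have h1 : c * |Δs| ≤ c₂ * |Δs| := mul_le_mul_of_nonneg_right hcc₂ (abs_nonneg _)
      linarith [hc₂ρ Δs hΔ]
    set S : Set ℝ := {t' | t' ∈ Icc 0 T ∧ ∀ τ ∈ Icc 0 t', ‖xp Δs τ - x τ‖ ≤ ρ} with hSdef
    have h0S : (0:ℝ) ∈ S := by
      refine ⟨⟨le_rfl, hT.le⟩, ?_⟩
      intro τ hτ
      have : τ = 0 := le_antisymm hτ.2 hτ.1
      subst this
      exact le_trans (hd0 Δs hΔη) hcρ
    have hbddS : BddAbove S := ⟨T, fun t' ht' => ht'.1.2⟩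
    have hneS : S.Nonempty := ⟨0, h0S⟩
    have htstar_mem : sSup S ∈ Icc (0:ℝ) T :=
      ⟨le_csSup hbddS h0S, csSup_le hneS (fun t' ht' => ht'.1.2)⟩
    have hA : ∀ τ, 0 ≤ τ → τ < sSup S → ‖xp Δs τ - x τ‖ ≤ ρ := by
      intro τ h0τ hτt
      obtain ⟨t', ht'S, hτt'⟩ := exists_lt_of_lt_csSup hneS hτt
      exact ht'S.2 τ ⟨h0τ, hτt'.le⟩
    have htstarS : sSup S ∈ S := by
      refine ⟨htstar_mem, ?_⟩
      intro τ hτ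
      rcases lt_or_eq_of_le hτ.2 with h | h
      · exact hA τ hτ.1 h
      · subst h
        rcases eq_or_lt_of_le htstar_mem.1 with h0 | h0
        · exact le_trans (h0 ▸ hd0 Δs hΔη) hcρ
        · have hne : (𝓝[Ico (0:ℝ) (sSup S)] (sSup S)).NeBot := by
            apply mem_closure_iff_nhdsWithin_neBot.mp
            rw [closure_Ico (ne_of_lt h0)]
            exact ⟨h0.le, le_rfl⟩
          have htd : Tendsto (fun τ' => ‖xp Δs τ' - x τ'‖) (𝓝[Ico (0:ℝ) (sSup S)] (sSup S))
              (𝓝 ‖xp Δs (sSup S) - x (sSup S)‖) := by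
            have h1 : ContinuousWithinAt (fun τ' => ‖xp Δs τ' - x τ'‖) (Icc 0 T) (sSup S) :=
              (hdc (sSup S) htstar_mem).norm
            exact h1.tendsto.mono_left (nhdsWithin_mono _
              (fun y hy => ⟨hy.1, le_trans hy.2.le htstar_mem.2⟩))
          refine le_of_tendsto htd ?_
          filter_upwards [self_mem_nhdsWithin] with τ' hτ'
          exact hA τ' hτ'.1 hτ'.2
    have hbtstar : ∀ τ ∈ Icc 0 (sSup S), ‖xp Δs τ - x τ‖ ≤ c₂ * |Δs| :=
      KEY (sSup S) htstar_mem htstarS.2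
    have htstarT : sSup S = T := by
      by_contra hne
      have hlt : sSup S < T := lt_of_le_of_ne htstar_mem.2 hne
      have hcontt : ContinuousWithinAt (fun τ' => xp Δs τ' - x τ') (Icc 0 T) (sSup S) :=
        hdc _ htstar_mem
      rw [Metric.continuousWithinAt_iff] at hcontt
      obtain ⟨δ', hδ'pos, hδ'⟩ := hcontt (ρ / 2) (by linarith)
      set t₁ := min (sSup S + δ' / 2) T with ht₁def
      have htt₁ : sSup S < t₁ := lt_min (by linarith) hlt
      have ht₁S : t₁ ∈ S := by
        refine ⟨⟨le_trans htstar_mem.1 htt₁.le, min_le_right _ _⟩, ?_⟩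
        intro τ hτ
        rcases le_or_gt τ (sSup S) with h | h
        · exact htstarS.2 τ ⟨hτ.1, h⟩
        · have hτT : τ ∈ Icc (0:ℝ) T := ⟨hτ.1, le_trans hτ.2 (min_le_right _ _)⟩
          have hd : dist τ (sSup S) < δ' := by
            rw [Real.dist_eq, abs_of_pos (by linarith)]
            have h8 : τ ≤ t₁ := hτ.2
            have h9 : t₁ ≤ sSup S + δ' / 2 := min_le_left _ _
            linarith
          have h10 := hδ' hτT hd
          rw [dist_eq_norm] at h10
          have h11 : ‖xp Δs (sSup S) - x (sSup S)‖ ≤ ρ / 2 :=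
            le_trans (hbtstar _ ⟨htstar_mem.1, le_rfl⟩) (hc₂ρ Δs hΔ)
          have h12 := habel τ (sSup S) (fun τ' => xp Δs τ' - x τ')
          have h13 : ‖(fun τ' => xp Δs τ' - x τ') τ - (fun τ' => xp Δs τ' - x τ') (sSup S)‖
              ≤ ρ / 2 := le_of_lt h10
          calc ‖xp Δs τ - x τ‖ ≤ ‖xp Δs (sSup S) - x (sSup S)‖
                + ‖(fun τ' => xp Δs τ' - x τ') τ - (fun τ' => xp Δs τ' - x τ') (sSup S)‖ := h12
            _ ≤ ρ / 2 + ρ / 2 := by linarith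
            _ = ρ := by ring
      have := le_csSup hbddS ht₁S
      linarith
    intro t ht
    exact hbtstar t (by rwa [htstarT])
  -- the Hamiltonian-type functions and their continuity
  set Q₀ : (Fin n → ℝ) × ℝ → ℝ := fun q => ∑ i, p q.2 i * F₀ q.1 q.2 i with hQ₀def
  set Q₁ : (Fin n → ℝ) × ℝ → ℝ := fun q => ∑ i, p q.2 i * F₁ q.1 q.2 i with hQ₁def
  have hQ₀c : ContinuousOn Q₀ tube₀ := by
    apply continuousOn_finset_sum
    intro i _
    exact (((continuous_apply i).comp_continuousOn (hpc.comp continuousOn_snd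
        (fun q hq => Icc_subset_Icc le_rfl hb₀T hq.1)))).mul
      ((continuous_apply i).comp_continuousOn (hds₀.contDiffOn.continuousOn.mono hsub₀))
  have hQ₁c : ContinuousOn Q₁ tube₁ := by
    apply continuousOn_finset_sum
    intro i _
    exact (((continuous_apply i).comp_continuousOn (hpc.comp continuousOn_snd
        (fun q hq => Icc_subset_Icc h0a₁ le_rfl hq.1)))).mul
      ((continuous_apply i).comp_continuousOn (hds₁.contDiffOn.continuousOn.mono hsub₁))
  have hxs₀ : (x s, s) ∈ tube₀ := hxtube₀ s ⟨hs0.le, hsb₀⟩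
  have hxs₁ : (x s, s) ∈ tube₁ := hxtube₁ s ⟨ha₁s, hsT.le⟩
  -- rewrite the limit value
  have hlim : (∑ j, p s j * (F₀ (x s) s j - F₁ (x s) s j)) = Q₀ (x s, s) - Q₁ (x s, s) := by
    rw [hQ₀def, hQ₁def, ← Finset.sum_sub_distrib]
    apply Finset.sum_congr rfl
    intro i _
    ring
  -- derivative of the adjoint pairing g(t) = ∑ᵢ pᵢ(t) (xp(t) - x(t))ᵢ
  have gderiv : ∀ Δs : ℝ, |Δs| ≤ η → ∀ t ∈ Ioo (0:ℝ) T, t ≠ s → t ≠ s + Δs →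
      HasDerivAt (fun τ => ∑ i, p τ i * (xp Δs τ i - x τ i))
        (∑ i, ((-(Matrix.vecMul (p t) (jacMat DF₀ DF₁ x s t))) i * (xp Δs t i - x t i)
          + p t i * (((if t < s + Δs then F₀ (xp Δs t) t else F₁ (xp Δs t) t)
            - (if t < s then F₀ (x t) t else F₁ (x t) t)) i))) t := by
    intro Δs hΔη t ht hts htsΔ
    obtain ⟨⟨hxpc, hxpd₀, hxpd₁, hxp0, hxpT⟩, hxpJ⟩ := hxp Δs hΔη
    have htIcc : t ∈ Icc (0:ℝ) T := ⟨ht.1.le, ht.2.le⟩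
    have hpd : HasDerivAt p (-(Matrix.vecMul (p t) (jacMat DF₀ DF₁ x s t))) t :=
      (hpode t htIcc hts).hasDerivAt (Icc_mem_nhds ht.1 ht.2)
    have hxd : HasDerivWithinAt x (if t < s then F₀ (x t) t else F₁ (x t) t) (Icc 0 T) t := by
      rcases lt_or_gt_of_ne hts with h | h
      · rw [if_pos h]; exact hx.2.1 t ⟨ht.1.le, h⟩
      · rw [if_neg (not_lt.mpr h.le)]; exact hx.2.2.1 t ⟨h, ht.2.le⟩
    have hxpd : HasDerivWithinAt (xp Δs)
        (if t < s + Δs then F₀ (xp Δs t) t else F₁ (xp Δs t) t) (Icc 0 T) t := by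
      rcases lt_or_gt_of_ne htsΔ with h | h
      · rw [if_pos h]; exact hxpd₀ t ⟨ht.1.le, h⟩
      · rw [if_neg (not_lt.mpr h.le)]; exact hxpd₁ t ⟨h, ht.2.le⟩
    apply HasDerivAt.fun_sum
    intro i _
    have hpdi : HasDerivAt (fun τ => p τ i)
        ((-(Matrix.vecMul (p t) (jacMat DF₀ DF₁ x s t))) i) t :=
      ((ContinuousLinearMap.proj (R := ℝ) (φ := fun _ : Fin n => ℝ) i).hasFDerivAt).comp_hasDerivAt t hpd
    have hddi := hasDerivAt_coord ht (hxpd.sub hxd) i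
    exact hpdi.mul hddi
  -- the ε-δ argument
  rw [hlim, Metric.tendsto_nhdsWithin_nhds]
  intro ε hε
  obtain ⟨δ₂, hδ₂pos, hδ₂⟩ := Metric.continuousWithinAt_iff.mp (hQ₀c (x s, s) hxs₀) (ε / 8)
    (by linarith)
  obtain ⟨δ₃, hδ₃pos, hδ₃⟩ := Metric.continuousWithinAt_iff.mp (hQ₁c (x s, s) hxs₁) (ε / 8)
    (by linarith)
  obtain ⟨δ₄, hδ₄pos, hδ₄⟩ := Metric.continuousWithinAt_iff.mp (hxc s ⟨hs0.le, hsT.le⟩)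
    (min δ₂ δ₃ / 4) (by positivity)
  have hCd : HasFDerivAt C (fderiv ℝ C (x T)) (x T) :=
    ((hC.differentiable one_ne_zero) (x T)).hasFDerivAt
  set ε₅ : ℝ := (ε / 8) / (c₂ + 1) with hε₅def
  have hε₅pos : 0 < ε₅ := by positivity
  obtain ⟨δ₅, hδ₅pos, hδ₅⟩ := Metric.eventually_nhds_iff.mp
    ((Asymptotics.isLittleO_iff.mp hCd.isLittleO) hε₅pos)
  set A₁ : ℝ := (n : ℝ) * (P * (L' * (c₂ * c₂))) with hA₁def
  set A₂ : ℝ := (n : ℝ) * (P * (K * c₂)) with hA₂def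
  have hA₁0 : 0 ≤ A₁ := by positivity
  have hA₂0 : 0 ≤ A₂ := by positivity
  set δ : ℝ := min δ₁ (min (min ((ε / 4) / (2 * T * A₁ + 1)) ((ε / 8) / (A₂ + 1)))
    (min (min δ₄ ((min δ₂ δ₃ / 4) / (c₂ + 1))) (min (min δ₂ δ₃ / 2) ((δ₅ / 2) / (c₂ + 1))))) with hδdef
  have hδpos : 0 < δ := by
    refine lt_min hδ₁pos (lt_min (lt_min ?_ ?_) (lt_min (lt_min hδ₄pos ?_) (lt_min ?_ ?_)))
    all_goals positivity
  refine ⟨δ, hδpos, ?_⟩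
  intro Δs hΔsne hdist
  have hΔne : Δs ≠ 0 := Set.mem_compl_singleton_iff.mp hΔsne
  rw [Real.dist_eq, sub_zero] at hdist
  have habs_pos : 0 < |Δs| := abs_pos.mpr hΔne
  have hΔδ₁ : |Δs| ≤ δ₁ := le_trans hdist.le (min_le_left _ _)
  have hΔE1 : |Δs| ≤ (ε / 4) / (2 * T * A₁ + 1) :=
    le_trans hdist.le (le_trans (min_le_right _ _) (le_trans (min_le_left _ _) (min_le_left _ _)))
  have hΔE2 : |Δs| ≤ (ε / 8) / (A₂ + 1) :=
    le_trans hdist.le (le_trans (min_le_right _ _) (le_trans (min_le_left _ _) (min_le_right _ _)))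
  have hΔδ₄ : |Δs| < δ₄ :=
    lt_of_lt_of_le hdist (le_trans (min_le_right _ _) (le_trans (min_le_right _ _)
      (le_trans (min_le_left _ _) (min_le_left _ _))))
  have hΔQ : |Δs| ≤ (min δ₂ δ₃ / 4) / (c₂ + 1) :=
    le_trans hdist.le (le_trans (min_le_right _ _) (le_trans (min_le_right _ _)
      (le_trans (min_le_left _ _) (min_le_right _ _))))
  have hΔQ2 : |Δs| ≤ min δ₂ δ₃ / 2 :=
    le_trans hdist.le (le_trans (min_le_right _ _) (le_trans (min_le_right _ _)
      (le_trans (min_le_right _ _) (min_le_left _ _))))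
  have hΔδ₅ : |Δs| ≤ (δ₅ / 2) / (c₂ + 1) :=
    le_trans hdist.le (le_trans (min_le_right _ _) (le_trans (min_le_right _ _)
      (le_trans (min_le_right _ _) (min_le_right _ _))))
  have hΔη : |Δs| ≤ η := le_trans hΔδ₁ hδ₁η
  have hSTAB := STAB Δs hΔδ₁
  have hdρ : ∀ t ∈ Icc (0:ℝ) T, ‖xp Δs t - x t‖ ≤ ρ := by
    intro t ht
    have := hc₂ρ Δs hΔδ₁
    linarith [hSTAB t ht]
  obtain ⟨hι₁, hι₂⟩ := abs_le.mp (le_refl |Δs|)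
  have hΔs : |Δs| ≤ s := le_trans hΔδ₁ hδ₁s
  have hΔTs : |Δs| ≤ T - s := le_trans hΔδ₁ hδ₁Ts
  have hΔρ : |Δs| ≤ ρ := le_trans hΔδ₁ hδ₁ρ
  set m : ℝ := min s (s + Δs) with hmdef
  set M : ℝ := max s (s + Δs) with hMdef
  have hm0 : 0 ≤ m := le_min hs0.le (by linarith)
  have hMT : M ≤ T := max_le hsT.le (by linarith)
  have hms : m ≤ s := min_le_left _ _
  have hsM : s ≤ M := le_max_left _ _
  have hmM : m ≤ M := le_trans hms hsM
  have hmΔ : m ≤ s + Δs := min_le_right _ _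
  have hΔM : s + Δs ≤ M := le_max_right _ _
  have hMm : M - m = |Δs| := by
    rcases le_total 0 Δs with h | h
    · rw [hmdef, hMdef, min_eq_left (by linarith), max_eq_right (by linarith),
        abs_of_nonneg h]; ring
    · rw [hmdef, hMdef, min_eq_right (by linarith), max_eq_left (by linarith),
        abs_of_nonpos h]; ring
  have hMb₀ : M ≤ b₀ := le_min (max_le (by linarith) (by linarith)) hMT
  have ha₁m : a₁ ≤ m := max_le (le_min (by linarith) (by linarith)) hm0
  obtain ⟨⟨hxpc, hxpd₀, hxpd₁, hxp0, hxpT⟩, hxpJ⟩ := hxp Δs hΔη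
  set g : ℝ → ℝ := fun τ => ∑ i, p τ i * (xp Δs τ i - x τ i) with hgdef
  have hgc : ContinuousOn g (Icc 0 T) := by
    apply continuousOn_finset_sum
    intro i _
    exact ((continuous_apply i).comp_continuousOn hpc).mul
      ((continuous_apply i).comp_continuousOn (hxpc.sub hxc))
  -- value of g at the endpoints
  have hg0 : g 0 = 0 := by
    rw [hgdef]
    apply Finset.sum_eq_zero
    intro i _
    by_cases hi : i ∈ I
    · rw [hx.2.2.2.1 i hi, hxp0 i hi]; ring
    · rw [hp0 i (Finset.mem_compl.mpr hi)]; ring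
  have hgT : (fderiv ℝ C (x T)) (xp Δs T - x T) = g T := by
    have hexp : (xp Δs T - x T) = ∑ i, (xp Δs T i - x T i) • (Pi.single i 1 : Fin n → ℝ) := by
      have h1 := pi_eq_sum_univ (xp Δs T - x T)
      convert h1 using 2 with i
      have : (Pi.single i 1 : Fin n → ℝ) = (fun j => if i = j then (1:ℝ) else 0) := by
        ext j
        simp [Pi.single_apply, eq_comm]
      rw [this]
      rfl
    rw [hexp, map_sum]
    rw [hgdef]
    apply Finset.sum_congr rfl
    intro i _
    rw [(fderiv ℝ C (x T)).map_smul]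
    by_cases hi : i ∈ E
    · rw [hx.2.2.2.2 i hi, hxpT i hi]
      simp
    · rw [smul_eq_mul, hpT i (Finset.mem_compl.mpr hi)]
      ring
  set hval : ℝ := Q₀ (x s, s) - Q₁ (x s, s) with hhval
  -- Estimate on [0, m]
  have EST1 : |g m - g 0| ≤ A₁ * |Δs| ^ 2 * T := by
    have hbound : ∀ t ∈ Ioo (0:ℝ) m, |(∑ i, p t i * ((F₀ (xp Δs t) t - F₀ (x t) t) i
        - DF₀ (x t) t (xp Δs t - x t) i))| ≤ A₁ * |Δs| ^ 2 := by
      intro t ht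
      have htIcc : t ∈ Icc (0:ℝ) T := ⟨ht.1.le, le_trans ht.2.le (le_trans hms hsT.le)⟩
      have h1 : ‖xp Δs t - x t‖ ≤ c₂ * |Δs| := hSTAB t htIcc
      have h2 : ‖xp Δs t - x t‖ ≤ ρ := hdρ t htIcc
      have htay := tay₀ t ⟨ht.1.le, le_trans ht.2.le (le_trans hms hsb₀)⟩ (xp Δs t) h2
      have hvnorm : ‖F₀ (xp Δs t) t - F₀ (x t) t - DF₀ (x t) t (xp Δs t - x t)‖
          ≤ L' * ((c₂ * |Δs|) * (c₂ * |Δs|)) := by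
        refine le_trans htay (mul_le_mul_of_nonneg_left ?_ hL'0)
        exact mul_self_le_mul_self (norm_nonneg _) h1
      have hdot : |∑ i, p t i * ((F₀ (xp Δs t) t - F₀ (x t) t) i
          - DF₀ (x t) t (xp Δs t - x t) i)|
          ≤ n * (P * (L' * ((c₂ * |Δs|) * (c₂ * |Δs|)))) :=
        dot_abs_le (fun i => hpP t htIcc i) hvnorm
      refine le_trans hdot (le_of_eq ?_)
      rw [hA₁def]; ring
    have hder : ∀ t ∈ Ioo (0:ℝ) m, HasDerivAt g (∑ i, p t i * ((F₀ (xp Δs t) t - F₀ (x t) t) i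
        - DF₀ (x t) t (xp Δs t - x t) i)) t := by
      intro t ht
      have hts : t < s := lt_of_lt_of_le ht.2 hms
      have htsΔ : t < s + Δs := lt_of_lt_of_le ht.2 hmΔ
      have hD := gderiv Δs hΔη t ⟨ht.1, lt_trans hts hsT⟩ (ne_of_lt hts) (ne_of_lt htsΔ)
      have hjac : jacMat DF₀ DF₁ x s t
          = LinearMap.toMatrix' ((DF₀ (x t) t : (Fin n → ℝ) →ₗ[ℝ] Fin n → ℝ)) := by
        simp only [jacMat, if_pos hts]
      rw [hgdef]
      have hval1 : (∑ i, ((-(Matrix.vecMul (p t) (jacMat DF₀ DF₁ x s t))) i * (xp Δs t i - x t i)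
          + p t i * (((if t < s + Δs then F₀ (xp Δs t) t else F₁ (xp Δs t) t)
            - (if t < s then F₀ (x t) t else F₁ (x t) t)) i)))
          = ∑ i, p t i * ((F₀ (xp Δs t) t - F₀ (x t) t) i
            - DF₀ (x t) t (xp Δs t - x t) i) := by
        simp only [hjac, if_pos hts, if_pos htsΔ]
        exact gprime_rewrite (p t) (xp Δs t - x t) (F₀ (xp Δs t) t - F₀ (x t) t) (DF₀ (x t) t)
      exact hval1 ▸ hD
    have h := mvt_abs_sub_le hm0 (hgc.mono (Icc_subset_Icc le_rfl (le_trans hms hsT.le)))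
      hder hbound
    calc |g m - g 0| ≤ A₁ * |Δs| ^ 2 * (m - 0) := h
      _ ≤ A₁ * |Δs| ^ 2 * T := by
          apply mul_le_mul_of_nonneg_left _ (by positivity)
          simp only [sub_zero]
          exact le_trans hms hsT.le
  -- Estimate on [M, T]
  have EST3 : |g T - g M| ≤ A₁ * |Δs| ^ 2 * T := by
    have hbound : ∀ t ∈ Ioo M T, |(∑ i, p t i * ((F₁ (xp Δs t) t - F₁ (x t) t) i
        - DF₁ (x t) t (xp Δs t - x t) i))| ≤ A₁ * |Δs| ^ 2 := by
      intro t ht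
      have htIcc : t ∈ Icc (0:ℝ) T := ⟨le_trans hm0 (le_trans hmM ht.1.le), ht.2.le⟩
      have h1 : ‖xp Δs t - x t‖ ≤ c₂ * |Δs| := hSTAB t htIcc
      have h2 : ‖xp Δs t - x t‖ ≤ ρ := hdρ t htIcc
      have htay := tay₁ t ⟨le_trans ha₁m (le_trans hmM ht.1.le), ht.2.le⟩ (xp Δs t) h2
      have hvnorm : ‖F₁ (xp Δs t) t - F₁ (x t) t - DF₁ (x t) t (xp Δs t - x t)‖
          ≤ L' * ((c₂ * |Δs|) * (c₂ * |Δs|)) := by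
        refine le_trans htay (mul_le_mul_of_nonneg_left ?_ hL'0)
        exact mul_self_le_mul_self (norm_nonneg _) h1
      have hdot : |∑ i, p t i * ((F₁ (xp Δs t) t - F₁ (x t) t) i
          - DF₁ (x t) t (xp Δs t - x t) i)|
          ≤ n * (P * (L' * ((c₂ * |Δs|) * (c₂ * |Δs|)))) :=
        dot_abs_le (fun i => hpP t htIcc i) hvnorm
      refine le_trans hdot (le_of_eq ?_)
      rw [hA₁def]; ring
    have hder : ∀ t ∈ Ioo M T, HasDerivAt g (∑ i, p t i * ((F₁ (xp Δs t) t - F₁ (x t) t) i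
        - DF₁ (x t) t (xp Δs t - x t) i)) t := by
      intro t ht
      have hts : s < t := lt_of_le_of_lt hsM ht.1
      have htsΔ : s + Δs < t := lt_of_le_of_lt hΔM ht.1
      have hD := gderiv Δs hΔη t ⟨lt_of_lt_of_le hs0 (le_trans hsM ht.1.le), ht.2⟩
        (ne_of_gt hts) (ne_of_gt htsΔ)
      have hjac : jacMat DF₀ DF₁ x s t
          = LinearMap.toMatrix' ((DF₁ (x t) t : (Fin n → ℝ) →ₗ[ℝ] Fin n → ℝ)) := by
        simp only [jacMat, if_neg (not_lt.mpr hts.le)]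
      rw [hgdef]
      have hval1 : (∑ i, ((-(Matrix.vecMul (p t) (jacMat DF₀ DF₁ x s t))) i * (xp Δs t i - x t i)
          + p t i * (((if t < s + Δs then F₀ (xp Δs t) t else F₁ (xp Δs t) t)
            - (if t < s then F₀ (x t) t else F₁ (x t) t)) i)))
          = ∑ i, p t i * ((F₁ (xp Δs t) t - F₁ (x t) t) i
            - DF₁ (x t) t (xp Δs t - x t) i) := by
        simp only [hjac, if_neg (not_lt.mpr hts.le), if_neg (not_lt.mpr htsΔ.le)]
        exact gprime_rewrite (p t) (xp Δs t - x t) (F₁ (xp Δs t) t - F₁ (x t) t) (DF₁ (x t) t)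
      exact hval1 ▸ hD
    have h := mvt_abs_sub_le hMT (hgc.mono (Icc_subset_Icc (le_trans hm0 hmM) le_rfl))
      hder hbound
    calc |g T - g M| ≤ A₁ * |Δs| ^ 2 * (T - M) := h
      _ ≤ A₁ * |Δs| ^ 2 * T := by
          apply mul_le_mul_of_nonneg_left _ (by positivity)
          linarith [le_trans hm0 hmM]
  -- common facts for the middle interval
  have hmidfacts : ∀ t ∈ Ioo m M, t ∈ Icc (0:ℝ) T ∧
      ((xp Δs t, t) ∈ tube₀ ∧ (xp Δs t, t) ∈ tube₁) ∧
      dist ((xp Δs t, t) : (Fin n → ℝ) × ℝ) ((x s, s)) < min δ₂ δ₃ ∧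
      dist ((x t, t) : (Fin n → ℝ) × ℝ) ((x s, s)) < min δ₂ δ₃ ∧
      (∀ l : (Fin n → ℝ) →L[ℝ] (Fin n → ℝ), ‖l‖ ≤ K →
        |∑ i, p t i * l (xp Δs t - x t) i| ≤ ε / 8) := by
    intro t ht
    have htIcc : t ∈ Icc (0:ℝ) T := ⟨le_trans hm0 ht.1.le, le_trans ht.2.le hMT⟩
    have hmin0 : 0 < min δ₂ δ₃ := lt_min hδ₂pos hδ₃pos
    have hts : |t - s| ≤ |Δs| := by
      rw [abs_le]
      constructor
      · have h1 : m ≤ t := ht.1.le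
        have h2 : m ≤ s := hms
        linarith [hMm]
      · have h1 : t ≤ M := ht.2.le
        linarith [hMm]
    have htsδ₄ : dist t s < δ₄ := by
      rw [Real.dist_eq]; exact lt_of_le_of_lt hts hΔδ₄
    have hxts : dist (x t) (x s) < min δ₂ δ₃ / 4 := hδ₄ htIcc htsδ₄
    have hc₂Q : c₂ * |Δs| ≤ min δ₂ δ₃ / 4 := mul_le_of_le_div1 hc₂0 (by positivity) hΔQ
    have hdxp : dist (xp Δs t) (x s) < min δ₂ δ₃ / 2 := by
      calc dist (xp Δs t) (x s) ≤ dist (xp Δs t) (x t) + dist (x t) (x s) := dist_triangle _ _ _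
        _ < min δ₂ δ₃ / 4 + min δ₂ δ₃ / 4 := by
            apply add_lt_add_of_le_of_lt _ hxts
            rw [dist_eq_norm]
            exact le_trans (hSTAB t htIcc) hc₂Q
        _ = min δ₂ δ₃ / 2 := by ring
    have htss : dist t s < min δ₂ δ₃ := by
      rw [Real.dist_eq]
      refine lt_of_le_of_lt (le_trans hts hΔQ2) ?_
      linarith
    refine ⟨htIcc, ⟨⟨⟨htIcc.1, le_trans ht.2.le hMb₀⟩, hdρ t htIcc⟩,
      ⟨⟨le_trans ha₁m ht.1.le, htIcc.2⟩, hdρ t htIcc⟩⟩, ?_, ?_, ?_⟩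
    · rw [Prod.dist_eq]
      apply max_lt _ htss
      refine lt_of_lt_of_le hdxp ?_
      linarith
    · rw [Prod.dist_eq]
      apply max_lt _ htss
      refine lt_of_lt_of_le hxts ?_
      linarith
    · intro l hl
      have hnorm : ‖l (xp Δs t - x t)‖ ≤ K * (c₂ * |Δs|) := by
        refine le_trans (l.le_opNorm _) ?_
        exact mul_le_mul hl (hSTAB t htIcc) (norm_nonneg _) hK0
      have hdot := dot_abs_le (fun i => hpP t htIcc i) hnorm
      refine le_trans hdot ?_
      have heq : (n : ℝ) * (P * (K * (c₂ * |Δs|))) = A₂ * |Δs| := by rw [hA₂def]; ring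
      rw [heq]
      exact mul_le_of_le_div1 hA₂0 (by positivity) hΔE2
  -- Estimate on [m, M]
  have EST2 : |g M - g m - Δs * hval| ≤ 3 * (ε / 8) * |Δs| := by
    have hcontf : ∀ q : ℝ, ContinuousOn (fun τ => g τ + τ * q) (Icc m M) := by
      intro q
      exact ((hgc.mono (Icc_subset_Icc hm0 hMT)).add
        ((continuous_id.mul continuous_const).continuousOn))
    rcases lt_or_gt_of_ne hΔne with hneg | hpos
    · -- Δs < 0 : m = s + Δs, M = s
      have hmeq : m = s + Δs := by rw [hmdef, min_eq_right (by linarith)]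
      have hMeq : M = s := by rw [hMdef, max_eq_left (by linarith)]
      have hder : ∀ t ∈ Ioo m M, HasDerivAt (fun τ => g τ + τ * hval)
          ((Q₁ (xp Δs t, t) - Q₀ (x t, t)
            - ∑ i, p t i * (DF₀ (x t) t (xp Δs t - x t)) i) + hval) t := by
        intro t ht
        have hts : t < s := hMeq ▸ ht.2
        have htsΔ : s + Δs < t := hmeq ▸ ht.1
        have htIoo : t ∈ Ioo (0:ℝ) T := ⟨lt_of_le_of_lt hm0 ht.1, lt_of_lt_of_le ht.2 hMT⟩
        have hD := gderiv Δs hΔη t htIoo (ne_of_lt hts) (ne_of_gt htsΔ)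
        have hjac : jacMat DF₀ DF₁ x s t
            = LinearMap.toMatrix' ((DF₀ (x t) t : (Fin n → ℝ) →ₗ[ℝ] Fin n → ℝ)) := by
          simp only [jacMat, if_pos hts]
        have hval1 : (∑ i, ((-(Matrix.vecMul (p t) (jacMat DF₀ DF₁ x s t))) i * (xp Δs t i - x t i)
            + p t i * (((if t < s + Δs then F₀ (xp Δs t) t else F₁ (xp Δs t) t)
              - (if t < s then F₀ (x t) t else F₁ (x t) t)) i)))
            = Q₁ (xp Δs t, t) - Q₀ (x t, t)
              - ∑ i, p t i * (DF₀ (x t) t (xp Δs t - x t)) i := by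
          simp only [hjac, if_pos hts, if_neg (not_lt.mpr htsΔ.le)]
          calc ∑ i, ((-(Matrix.vecMul (p t)
                (LinearMap.toMatrix' ((DF₀ (x t) t : (Fin n → ℝ) →L[ℝ] Fin n → ℝ) :
                  (Fin n → ℝ) →ₗ[ℝ] Fin n → ℝ)))) i * (xp Δs t i - x t i)
                + p t i * ((F₁ (xp Δs t) t - F₀ (x t) t) i))
              = ∑ i, p t i * ((F₁ (xp Δs t) t - F₀ (x t) t) i - (DF₀ (x t) t) (xp Δs t - x t) i) :=
                gprime_rewrite (p t) (xp Δs t - x t) (F₁ (xp Δs t) t - F₀ (x t) t) (DF₀ (x t) t)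
            _ = Q₁ (xp Δs t, t) - Q₀ (x t, t)
                - ∑ i, p t i * ((DF₀ (x t) t) (xp Δs t - x t)) i := by
                rw [hQ₀def, hQ₁def]
                dsimp only
                rw [← Finset.sum_sub_distrib, ← Finset.sum_sub_distrib]
                apply Finset.sum_congr rfl
                intro i _
                simp only [Pi.sub_apply]
                ring
        have hgd : HasDerivAt g (Q₁ (xp Δs t, t) - Q₀ (x t, t)
            - ∑ i, p t i * (DF₀ (x t) t (xp Δs t - x t)) i) t := by
          rw [hgdef]
          exact hval1 ▸ hD
        exact hgd.add (hasDerivAt_mul_const hval)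
      have hbound : ∀ t ∈ Ioo m M, |(Q₁ (xp Δs t, t) - Q₀ (x t, t)
          - ∑ i, p t i * (DF₀ (x t) t (xp Δs t - x t)) i) + hval| ≤ 3 * (ε / 8) := by
        intro t ht
        obtain ⟨htIcc, ⟨htb₀, htb₁⟩, hdq, hdx, hA2⟩ := hmidfacts t ht
        have h1 := hδ₃ htb₁ (lt_of_lt_of_le hdq (min_le_right _ _))
        have h2 := hδ₂ (hxtube₀ t ⟨htIcc.1, le_trans ht.2.le hMb₀⟩)
          (lt_of_lt_of_le hdx (min_le_left _ _))
        have h3 := hA2 (DF₀ (x t) t) (hDK₀ _ _ (hxtube₀ t ⟨htIcc.1, le_trans ht.2.le hMb₀⟩))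
        rw [Real.dist_eq] at h1 h2
        have heq : (Q₁ (xp Δs t, t) - Q₀ (x t, t)
            - ∑ i, p t i * (DF₀ (x t) t (xp Δs t - x t)) i) + hval
            = ((Q₁ (xp Δs t, t) - Q₁ (x s, s)) - (Q₀ (x t, t) - Q₀ (x s, s)))
              - ∑ i, p t i * (DF₀ (x t) t (xp Δs t - x t)) i := by
          rw [hhval]; ring
        rw [heq]
        have t1 : |((Q₁ (xp Δs t, t) - Q₁ (x s, s)) - (Q₀ (x t, t) - Q₀ (x s, s)))
            - ∑ i, p t i * (DF₀ (x t) t (xp Δs t - x t)) i|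
            ≤ |Q₁ (xp Δs t, t) - Q₁ (x s, s)| + |Q₀ (x t, t) - Q₀ (x s, s)|
              + |∑ i, p t i * (DF₀ (x t) t (xp Δs t - x t)) i| := by
          calc |((Q₁ (xp Δs t, t) - Q₁ (x s, s)) - (Q₀ (x t, t) - Q₀ (x s, s)))
              - ∑ i, p t i * (DF₀ (x t) t (xp Δs t - x t)) i|
              ≤ |(Q₁ (xp Δs t, t) - Q₁ (x s, s)) - (Q₀ (x t, t) - Q₀ (x s, s))|
                + |∑ i, p t i * (DF₀ (x t) t (xp Δs t - x t)) i| := abs_sub _ _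
            _ ≤ _ := by
                have := abs_sub (Q₁ (xp Δs t, t) - Q₁ (x s, s)) (Q₀ (x t, t) - Q₀ (x s, s))
                linarith
        refine le_trans t1 ?_
        linarith
      have h := mvt_abs_sub_le hmM (hcontf hval) hder hbound
      have hMms : M - m = -Δs := by rw [hMm, abs_of_neg hneg]
      have h9 : g M - g m - Δs * hval = (g M + M * hval) - (g m + m * hval) := by
        have h8 : Δs = -(M - m) := by rw [hMms]; ring
        rw [h8]; ring
      rw [h9]
      refine le_trans h (le_of_eq ?_)
      rw [hMm]
    · -- Δs > 0 : m = s, M = s + Δs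
      have hmeq : m = s := by rw [hmdef, min_eq_left (by linarith)]
      have hMeq : M = s + Δs := by rw [hMdef, max_eq_right (by linarith)]
      have hder : ∀ t ∈ Ioo m M, HasDerivAt (fun τ => g τ + τ * (-hval))
          ((Q₀ (xp Δs t, t) - Q₁ (x t, t)
            - ∑ i, p t i * (DF₁ (x t) t (xp Δs t - x t)) i) + (-hval)) t := by
        intro t ht
        have hts : s < t := hmeq ▸ ht.1
        have htsΔ : t < s + Δs := hMeq ▸ ht.2
        have htIoo : t ∈ Ioo (0:ℝ) T := ⟨lt_of_le_of_lt hm0 ht.1, lt_of_lt_of_le ht.2 hMT⟩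
        have hD := gderiv Δs hΔη t htIoo (ne_of_gt hts) (ne_of_lt htsΔ)
        have hjac : jacMat DF₀ DF₁ x s t
            = LinearMap.toMatrix' ((DF₁ (x t) t : (Fin n → ℝ) →ₗ[ℝ] Fin n → ℝ)) := by
          simp only [jacMat, if_neg (not_lt.mpr hts.le)]
        have hval1 : (∑ i, ((-(Matrix.vecMul (p t) (jacMat DF₀ DF₁ x s t))) i * (xp Δs t i - x t i)
            + p t i * (((if t < s + Δs then F₀ (xp Δs t) t else F₁ (xp Δs t) t)
              - (if t < s then F₀ (x t) t else F₁ (x t) t)) i)))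
            = Q₀ (xp Δs t, t) - Q₁ (x t, t)
              - ∑ i, p t i * (DF₁ (x t) t (xp Δs t - x t)) i := by
          simp only [hjac, if_pos htsΔ, if_neg (not_lt.mpr hts.le)]
          calc ∑ i, ((-(Matrix.vecMul (p t)
                (LinearMap.toMatrix' ((DF₁ (x t) t : (Fin n → ℝ) →L[ℝ] Fin n → ℝ) :
                  (Fin n → ℝ) →ₗ[ℝ] Fin n → ℝ)))) i * (xp Δs t i - x t i)
                + p t i * ((F₀ (xp Δs t) t - F₁ (x t) t) i))
              = ∑ i, p t i * ((F₀ (xp Δs t) t - F₁ (x t) t) i - (DF₁ (x t) t) (xp Δs t - x t) i) :=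
                gprime_rewrite (p t) (xp Δs t - x t) (F₀ (xp Δs t) t - F₁ (x t) t) (DF₁ (x t) t)
            _ = Q₀ (xp Δs t, t) - Q₁ (x t, t)
                - ∑ i, p t i * ((DF₁ (x t) t) (xp Δs t - x t)) i := by
                rw [hQ₀def, hQ₁def]
                dsimp only
                rw [← Finset.sum_sub_distrib, ← Finset.sum_sub_distrib]
                apply Finset.sum_congr rfl
                intro i _
                simp only [Pi.sub_apply]
                ring
        have hgd : HasDerivAt g (Q₀ (xp Δs t, t) - Q₁ (x t, t)
            - ∑ i, p t i * (DF₁ (x t) t (xp Δs t - x t)) i) t := by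
          rw [hgdef]
          exact hval1 ▸ hD
        exact hgd.add (hasDerivAt_mul_const (-hval))
      have hbound : ∀ t ∈ Ioo m M, |(Q₀ (xp Δs t, t) - Q₁ (x t, t)
          - ∑ i, p t i * (DF₁ (x t) t (xp Δs t - x t)) i) + (-hval)| ≤ 3 * (ε / 8) := by
        intro t ht
        obtain ⟨htIcc, ⟨htb₀, htb₁⟩, hdq, hdx, hA2⟩ := hmidfacts t ht
        have h1 := hδ₂ htb₀ (lt_of_lt_of_le hdq (min_le_left _ _))
        have h2 := hδ₃ (hxtube₁ t ⟨le_trans ha₁m ht.1.le, htIcc.2⟩)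
          (lt_of_lt_of_le hdx (min_le_right _ _))
        have h3 := hA2 (DF₁ (x t) t)
          (hDK₁ _ _ (hxtube₁ t ⟨le_trans ha₁m ht.1.le, htIcc.2⟩))
        rw [Real.dist_eq] at h1 h2
        have heq : (Q₀ (xp Δs t, t) - Q₁ (x t, t)
            - ∑ i, p t i * (DF₁ (x t) t (xp Δs t - x t)) i) + (-hval)
            = ((Q₀ (xp Δs t, t) - Q₀ (x s, s)) - (Q₁ (x t, t) - Q₁ (x s, s)))
              - ∑ i, p t i * (DF₁ (x t) t (xp Δs t - x t)) i := by
          rw [hhval]; ring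
        rw [heq]
        have t1 : |((Q₀ (xp Δs t, t) - Q₀ (x s, s)) - (Q₁ (x t, t) - Q₁ (x s, s)))
            - ∑ i, p t i * (DF₁ (x t) t (xp Δs t - x t)) i|
            ≤ |Q₀ (xp Δs t, t) - Q₀ (x s, s)| + |Q₁ (x t, t) - Q₁ (x s, s)|
              + |∑ i, p t i * (DF₁ (x t) t (xp Δs t - x t)) i| := by
          calc |((Q₀ (xp Δs t, t) - Q₀ (x s, s)) - (Q₁ (x t, t) - Q₁ (x s, s)))
              - ∑ i, p t i * (DF₁ (x t) t (xp Δs t - x t)) i|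
              ≤ |(Q₀ (xp Δs t, t) - Q₀ (x s, s)) - (Q₁ (x t, t) - Q₁ (x s, s))|
                + |∑ i, p t i * (DF₁ (x t) t (xp Δs t - x t)) i| := abs_sub _ _
            _ ≤ _ := by
                have := abs_sub (Q₀ (xp Δs t, t) - Q₀ (x s, s)) (Q₁ (x t, t) - Q₁ (x s, s))
                linarith
        refine le_trans t1 ?_
        linarith
      have h := mvt_abs_sub_le hmM (hcontf (-hval)) hder hbound
      have hMms : M - m = Δs := by rw [hMm, abs_of_pos hpos]
      have h9 : g M - g m - Δs * hval = (g M + M * (-hval)) - (g m + m * (-hval)) := by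
        have h8 : Δs = M - m := hMms.symm
        rw [h8]; ring
      rw [h9]
      refine le_trans h (le_of_eq ?_)
      rw [hMm]
  -- final assembly
  have hc₂δ₅ : c₂ * |Δs| ≤ δ₅ / 2 := mul_le_of_le_div1 hc₂0 (by positivity) hΔδ₅
  have hECT : |C (xp Δs T) - C (x T) - g T| ≤ (ε / 8) * |Δs| := by
    have hy : dist (xp Δs T) (x T) < δ₅ := by
      rw [dist_eq_norm]
      exact lt_of_le_of_lt (le_trans (hSTAB T ⟨hT.le, le_rfl⟩) hc₂δ₅) (by linarith)
    have h := hδ₅ hy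
    rw [hgT] at h
    rw [Real.norm_eq_abs] at h
    have h2 : ‖xp Δs T - x T‖ ≤ c₂ * |Δs| := hSTAB T ⟨hT.le, le_rfl⟩
    have h3 : ε₅ * ‖xp Δs T - x T‖ ≤ ε₅ * (c₂ * |Δs|) :=
      mul_le_mul_of_nonneg_left h2 hε₅pos.le
    have h5 : c₂ * ε₅ ≤ ε / 8 := mul_le_of_le_div1 hc₂0 (by positivity) le_rfl
    have h6 : (c₂ * ε₅) * |Δs| ≤ (ε / 8) * |Δs| :=
      mul_le_mul_of_nonneg_right h5 (abs_nonneg _)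
    have h4 : ε₅ * (c₂ * |Δs|) = (c₂ * ε₅) * |Δs| := by ring
    linarith
  have h1 : 2 * T * A₁ * |Δs| ≤ ε / 4 := mul_le_of_le_div1 (by positivity) (by positivity) hΔE1
  have hE13 : A₁ * |Δs| ^ 2 * T + A₁ * |Δs| ^ 2 * T ≤ (ε / 4) * |Δs| := by
    have h2 : A₁ * |Δs| ^ 2 * T + A₁ * |Δs| ^ 2 * T = (2 * T * A₁ * |Δs|) * |Δs| := by ring
    rw [h2]
    exact mul_le_mul_of_nonneg_right h1 (abs_nonneg _)
  have htot : |C (xp Δs T) - C (x T) - Δs * hval| ≤ 3 / 4 * ε * |Δs| := by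
    have hsum : C (xp Δs T) - C (x T) - Δs * hval = (C (xp Δs T) - C (x T) - g T)
        + (g m - g 0) + (g M - g m - Δs * hval) + (g T - g M) := by
      rw [hg0]; ring
    rw [hsum]
    have t1 : |(C (xp Δs T) - C (x T) - g T) + (g m - g 0) + (g M - g m - Δs * hval)
        + (g T - g M)| ≤ |C (xp Δs T) - C (x T) - g T| + |g m - g 0|
          + |g M - g m - Δs * hval| + |g T - g M| := by
      have u1 := abs_add_le ((C (xp Δs T) - C (x T) - g T) + (g m - g 0)
        + (g M - g m - Δs * hval)) (g T - g M)
      have u2 := abs_add_three (C (xp Δs T) - C (x T) - g T) (g m - g 0)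
        (g M - g m - Δs * hval)
      linarith
    refine le_trans t1 ?_
    linarith
  rw [Real.dist_eq]
  have hq : (C (xp Δs T) - C (x T)) / Δs - hval
      = (C (xp Δs T) - C (x T) - Δs * hval) / Δs := by
    field_simp
  rw [hq, abs_div, div_lt_iff₀ habs_pos]
  refine lt_of_le_of_lt htot ?_
  have h10 : 3 / 4 * ε < ε := by linarith
  exact mul_lt_mul_of_pos_right h10 habs_pos
end

section
/- Assume Dynamics Smoothness holds. For θ ∈ ℝ^{|J|}, let y_θ : [0,T] → ℝⁿ be a solution of the initial-value problem ẏ(t) = F(y(t),t), y_I(0) = b_I, y_J(0) = x_J(0) + θ, satisfying ‖y_θ(t) − x(t)‖ ≤ e^{Lt}‖θ‖ for all t ∈ [0,T], and let z_θ : [0,T] → ℝⁿ solve the linearized problem ż(t) = ∇ₓF(x(t),t)z(t) for t ≠ s, z_I(0) = 0, z_J(0) = θ. Then there exist constants c and r̄ > 0, independent of θ, such that whenever ‖θ‖ ≤ r̄, one has ‖y_θ(t) − x(t) − z_θ(t)‖ ≤ c‖θ‖² for all t ∈ [0,T]. -/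
open Set Metric

open Topology Filter

lemma deriv_bound_aux {n : ℕ} {Fd : (Fin n → ℝ) → ℝ → Fin n → ℝ}
    {DFd : (Fin n → ℝ) → ℝ → (Fin n → ℝ) →L[ℝ] (Fin n → ℝ)}
    {x : ℝ → Fin n → ℝ} {a b ρ L L' K : ℝ}
    (hds : DynSmooth n Fd DFd x a b ρ L) (hLL' : L ≤ L') (hL' : 0 ≤ L')
    {t : ℝ} (ht : t ∈ Icc a b) {yt zt : Fin n → ℝ} (hyρ : ‖yt - x t‖ ≤ ρ)
    (hK : ‖DFd (x t) t‖ ≤ K) :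
    ‖Fd yt t - Fd (x t) t - DFd (x t) t zt‖ ≤ K * ‖yt - x t - zt‖ + L' * ‖yt - x t‖ ^ 2 := by
  set A := DFd (x t) t with hA
  have hρ0 : (0:ℝ) ≤ ρ := le_trans (norm_nonneg _) hyρ
  have hR : ‖Fd yt t - Fd (x t) t - A (yt - x t)‖ ≤ (L' * ‖yt - x t‖) * ‖yt - x t‖ := by
    refine Convex.norm_image_sub_le_of_norm_hasFDerivWithin_le'
      (f := fun χ => Fd χ t) (f' := fun χ => DFd χ t) (φ := A)
      (s := closedBall (x t) ‖yt - x t‖)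
      (fun χ hχ => ((hds.hasFDeriv χ t ht
        (le_trans (mem_closedBall_iff_norm.1 hχ) hyρ)).hasFDerivWithinAt))
      (fun χ hχ => ?_) (convex_closedBall _ _)
      (mem_closedBall_self (norm_nonneg _)) (mem_closedBall_iff_norm.2 le_rfl)
    have h5 : ‖χ - x t‖ ≤ ‖yt - x t‖ := mem_closedBall_iff_norm.1 hχ
    have h6 : ‖DFd χ t - A‖ ≤ L * ‖χ - x t‖ := by
      rw [hA]
      exact hds.lip t χ (x t) ht (le_trans h5 hyρ) (by simp [hρ0])
    calc ‖DFd χ t - A‖ ≤ L * ‖χ - x t‖ := h6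
      _ ≤ L' * ‖χ - x t‖ := mul_le_mul_of_nonneg_right hLL' (norm_nonneg _)
      _ ≤ L' * ‖yt - x t‖ := mul_le_mul_of_nonneg_left h5 hL'
  have heq : Fd yt t - Fd (x t) t - A zt
      = (Fd yt t - Fd (x t) t - A (yt - x t)) + A (yt - x t - zt) := by
    have : A (yt - x t - zt) = A (yt - x t) - A zt := map_sub A _ _
    rw [this]; abel
  rw [heq]
  have h2 : ‖A (yt - x t - zt)‖ ≤ K * ‖yt - x t - zt‖ :=
    le_trans (A.le_opNorm _) (mul_le_mul_of_nonneg_right hK (norm_nonneg _))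
  have h3 := norm_add_le (Fd yt t - Fd (x t) t - A (yt - x t)) (A (yt - x t - zt))
  have h4 : (L' * ‖yt - x t‖) * ‖yt - x t‖ = L' * ‖yt - x t‖ ^ 2 := by ring
  linarith

/-- the linearized problem gives an `O(‖θ‖²)` approximation to the
perturbation of the trajectory induced by perturbing the free initial components. -/
theorem linearization_quadratic_error
    {n : ℕ} (hn : 0 < n) (T s ρ L : ℝ) (hT : 0 < T) (hs : s ∈ Ioo 0 T) (hρ : 0 < ρ)
    (I : Finset (Fin n)) (bI : Fin n → ℝ)
    (F₀ F₁ : (Fin n → ℝ) → ℝ → Fin n → ℝ)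
    (DF₀ DF₁ : (Fin n → ℝ) → ℝ → (Fin n → ℝ) →L[ℝ] (Fin n → ℝ))
    (x : ℝ → Fin n → ℝ)
    -- `x` solves the switched dynamics with initial condition `x_I(0) = b_I`
    (hxc : ContinuousOn x (Icc 0 T))
    (hx₀ : ∀ t ∈ Ico 0 s, HasDerivWithinAt x (F₀ (x t) t) (Icc 0 T) t)
    (hx₁ : ∀ t ∈ Ioc s T, HasDerivWithinAt x (F₁ (x t) t) (Icc 0 T) t)
    (hxI : ∀ i ∈ I, x 0 i = bI i)
    -- Dynamics Smoothness on the two tubes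
    (hds₀ : DynSmooth n F₀ DF₀ x 0 (s + ρ) ρ L)
    (hds₁ : DynSmooth n F₁ DF₁ x (s - ρ) T ρ L) :
    ∃ c : ℝ, ∃ r > (0 : ℝ), ∀ θ : {j // j ∈ Iᶜ} → ℝ, ‖θ‖ ≤ r →
      ∀ y z : ℝ → Fin n → ℝ,
      -- `y = y_θ` solves the initial-value problem with initial data
      -- `y_I(0) = b_I`, `y_J(0) = x_J(0) + θ`, and satisfies `‖y - x‖ ≤ e^{Lt}‖θ‖`
      ContinuousOn y (Icc 0 T) →
      (∀ t ∈ Ico 0 s, HasDerivWithinAt y (F₀ (y t) t) (Icc 0 T) t) →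
      (∀ t ∈ Ioc s T, HasDerivWithinAt y (F₁ (y t) t) (Icc 0 T) t) →
      (∀ i ∈ I, y 0 i = bI i) →
      (∀ j : {j // j ∈ Iᶜ}, y 0 j.1 = x 0 j.1 + θ j) →
      (∀ t ∈ Icc 0 T, ‖y t - x t‖ ≤ Real.exp (L * t) * ‖θ‖) →
      -- `z = z_θ` solves the linearized problem `ż = ∇ₓF(x(t),t) z` with
      -- `z_I(0) = 0`, `z_J(0) = θ`
      ContinuousOn z (Icc 0 T) →
      (∀ t ∈ Icc 0 T, t ≠ s → HasDerivWithinAt z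
        ((if t < s then DF₀ (x t) t else DF₁ (x t) t) (z t)) (Icc 0 T) t) →
      (∀ i ∈ I, z 0 i = 0) →
      (∀ j : {j // j ∈ Iᶜ}, z 0 j.1 = θ j) →
      -- conclusion: `‖y_θ(t) - x(t) - z_θ(t)‖ ≤ c ‖θ‖²` on `[0,T]`
      ∀ t ∈ Icc 0 T, ‖y t - x t - z t‖ ≤ c * ‖θ‖ ^ 2 := by
  obtain ⟨hs0, hsT⟩ := hs
  set L' : ℝ := max L 0 with hL'def
  have hLL' : L ≤ L' := le_max_left _ _
  have hL'0 : (0:ℝ) ≤ L' := le_max_right _ _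
  set E : ℝ := L' * (Real.exp (L' * T)) ^ 2 with hEdef
  have hE0 : 0 ≤ E := by positivity
  have hmap₀ : MapsTo (fun t => (x t, t)) (Icc 0 s)
      {p : (Fin n → ℝ) × ℝ | p.2 ∈ Icc 0 (s + ρ) ∧ ‖p.1 - x p.2‖ ≤ ρ} := by
    intro t ht
    exact ⟨⟨ht.1, by linarith [ht.2]⟩, by simp [hρ.le]⟩
  have hmap₁ : MapsTo (fun t => (x t, t)) (Icc s T)
      {p : (Fin n → ℝ) × ℝ | p.2 ∈ Icc (s - ρ) T ∧ ‖p.1 - x p.2‖ ≤ ρ} := by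
    intro t ht
    exact ⟨⟨by linarith [ht.1], ht.2⟩, by simp [hρ.le]⟩
  have hcont₀ : ContinuousOn (fun t => DF₀ (x t) t) (Icc 0 s) :=
    hds₀.contDeriv.comp
      ((hxc.mono (Icc_subset_Icc le_rfl hsT.le)).prodMk continuousOn_id) hmap₀
  have hcont₁ : ContinuousOn (fun t => DF₁ (x t) t) (Icc s T) :=
    hds₁.contDeriv.comp
      ((hxc.mono (Icc_subset_Icc hs0.le le_rfl)).prodMk continuousOn_id) hmap₁
  obtain ⟨C₀, hC₀⟩ := isCompact_Icc.exists_bound_of_continuousOn hcont₀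
  obtain ⟨C₁, hC₁⟩ := isCompact_Icc.exists_bound_of_continuousOn hcont₁
  set K : ℝ := max (max C₀ C₁) 1 with hKdef
  have hK1 : (1:ℝ) ≤ K := le_max_right _ _
  have hK0 : (0:ℝ) < K := lt_of_lt_of_le zero_lt_one hK1
  have hKC₀ : C₀ ≤ K := le_trans (le_max_left _ _) (le_max_left _ _)
  have hKC₁ : C₁ ≤ K := le_trans (le_max_right _ _) (le_max_left _ _)
  have hKT0 : 0 ≤ K * T := by positivity
  have hgb : ∀ δ' ε' u : ℝ, 0 ≤ δ' → 0 ≤ ε' → 0 ≤ u → u ≤ T →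
      gronwallBound δ' K ε' u ≤ (δ' + ε') * Real.exp (K * T) := by
    intro δ' ε' u hδ hε hu huT
    rw [gronwallBound_of_K_ne_0 hK0.ne']
    have h1 : Real.exp (K * u) ≤ Real.exp (K * T) :=
      Real.exp_le_exp.2 (by nlinarith)
    have h2 : (1:ℝ) ≤ Real.exp (K * u) := Real.one_le_exp (by positivity)
    have h3 : ε' / K ≤ ε' := div_le_self hε hK1
    have h4 : (0:ℝ) ≤ ε' / K := by positivity
    have h5 : δ' * Real.exp (K * u) ≤ δ' * Real.exp (K * T) :=
      mul_le_mul_of_nonneg_left h1 hδ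
    have h6 : ε' / K * (Real.exp (K * u) - 1) ≤ ε' * Real.exp (K * T) :=
      mul_le_mul h3 (by linarith) (by linarith) hε
    calc δ' * Real.exp (K * u) + ε' / K * (Real.exp (K * u) - 1)
        ≤ δ' * Real.exp (K * T) + ε' * Real.exp (K * T) := by linarith
      _ = (δ' + ε') * Real.exp (K * T) := by ring
  refine ⟨(E * Real.exp (K * T) + E) * Real.exp (K * T), ρ / Real.exp (L' * T),
    by positivity, ?_⟩
  intro θ hθr y z hyc hy₀ hy₁ hyI hyJ hbnd hzc hz hzI hzJ
  set c : ℝ := (E * Real.exp (K * T) + E) * Real.exp (K * T) with hcdef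
  set w : ℝ → Fin n → ℝ := fun u => y u - x u - z u with hwdef
  have hw0 : w 0 = 0 := by
    funext i
    by_cases hi : i ∈ I
    · simp [hwdef, hyI i hi, hzI i hi, hxI i hi]
    · have hj : i ∈ Iᶜ := Finset.mem_compl.2 hi
      simp [hwdef, hyJ ⟨i, hj⟩, hzJ ⟨i, hj⟩]
  have hwc : ContinuousOn w (Icc 0 T) := (hyc.sub hxc).sub hzc
  have hexp : ∀ t ∈ Icc (0:ℝ) T, Real.exp (L * t) ≤ Real.exp (L' * T) := by
    intro t ht
    refine Real.exp_le_exp.2 ?_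
    calc L * t ≤ L' * t := mul_le_mul_of_nonneg_right hLL' ht.1
      _ ≤ L' * T := mul_le_mul_of_nonneg_left ht.2 hL'0
  have hyxρ : ∀ t ∈ Icc (0:ℝ) T, ‖y t - x t‖ ≤ ρ := by
    intro t ht
    have h1 : Real.exp (L * t) * ‖θ‖ ≤ Real.exp (L' * T) * (ρ / Real.exp (L' * T)) :=
      mul_le_mul (hexp t ht) hθr (norm_nonneg _) (Real.exp_pos _).le
    have h2 : Real.exp (L' * T) * (ρ / Real.exp (L' * T)) = ρ := by
      field_simp
    exact le_trans (hbnd t ht) (by rw [h2] at h1; exact h1)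
  have hyxsq : ∀ t ∈ Icc (0:ℝ) T, L' * ‖y t - x t‖ ^ 2 ≤ E * ‖θ‖ ^ 2 := by
    intro t ht
    have h1 : ‖y t - x t‖ ≤ Real.exp (L' * T) * ‖θ‖ :=
      le_trans (hbnd t ht) (mul_le_mul_of_nonneg_right (hexp t ht) (norm_nonneg _))
    have h2 : ‖y t - x t‖ ^ 2 ≤ (Real.exp (L' * T) * ‖θ‖) ^ 2 :=
      pow_le_pow_left₀ (norm_nonneg _) h1 2
    calc L' * ‖y t - x t‖ ^ 2 ≤ L' * ((Real.exp (L' * T) * ‖θ‖) ^ 2) :=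
          mul_le_mul_of_nonneg_left h2 hL'0
      _ = E * ‖θ‖ ^ 2 := by rw [hEdef]; ring
  have hθsq0 : (0:ℝ) ≤ E * ‖θ‖ ^ 2 := by positivity
  have deriv₀ : ∀ u ∈ Ico (0:ℝ) s, HasDerivWithinAt w
      (F₀ (y u) u - F₀ (x u) u - DF₀ (x u) u (z u)) (Ici u) u := by
    intro u hu
    have huT : u ∈ Icc (0:ℝ) T := ⟨hu.1, le_of_lt (hu.2.trans hsT)⟩
    have hzd := hz u huT (ne_of_lt hu.2)
    rw [if_pos hu.2] at hzd
    have hD : HasDerivWithinAt w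
        (F₀ (y u) u - F₀ (x u) u - DF₀ (x u) u (z u)) (Icc 0 T) u :=
      ((hy₀ u hu).sub (hx₀ u hu)).sub hzd
    exact hD.mono_of_mem_nhdsWithin
      (Icc_mem_nhdsGE_of_mem ⟨hu.1, hu.2.trans hsT⟩)
  have bound₀ : ∀ u ∈ Ico (0:ℝ) s,
      ‖F₀ (y u) u - F₀ (x u) u - DF₀ (x u) u (z u)‖ ≤ K * ‖w u‖ + E * ‖θ‖ ^ 2 := by
    intro u hu
    have huT : u ∈ Icc (0:ℝ) T := ⟨hu.1, le_of_lt (hu.2.trans hsT)⟩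
    have h1 := deriv_bound_aux hds₀ hLL' hL'0
      (t := u) ⟨hu.1, by linarith [hu.2.le]⟩ (zt := z u) (hyxρ u huT)
      (le_trans (hC₀ u ⟨hu.1, hu.2.le⟩) hKC₀)
    have h2 := hyxsq u huT
    have h3 : w u = y u - x u - z u := rfl
    rw [h3]; linarith
  have gron1 := norm_le_gronwallBound_of_norm_deriv_right_le
    (f := w) (f' := fun u => F₀ (y u) u - F₀ (x u) u - DF₀ (x u) u (z u))
    (δ := 0) (K := K) (ε := E * ‖θ‖ ^ 2) (a := 0) (b := s)
    (hwc.mono (Icc_subset_Icc le_rfl hsT.le)) deriv₀ (by rw [hw0]; simp) bound₀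
  have step1 : ∀ u ∈ Icc (0:ℝ) s, ‖w u‖ ≤ E * ‖θ‖ ^ 2 * Real.exp (K * T) := by
    intro u hu
    have h1 := gron1 u hu
    rw [sub_zero] at h1
    have h2 := hgb 0 (E * ‖θ‖ ^ 2) u le_rfl hθsq0 hu.1 (hu.2.trans hsT.le)
    calc ‖w u‖ ≤ (0 + E * ‖θ‖ ^ 2) * Real.exp (K * T) := le_trans h1 h2
      _ = E * ‖θ‖ ^ 2 * Real.exp (K * T) := by ring
  intro t ht
  have hgoal : ‖w t‖ ≤ c * ‖θ‖ ^ 2 → ‖y t - x t - z t‖ ≤ c * ‖θ‖ ^ 2 := fun h => h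
  apply hgoal
  have hexpKT : (1:ℝ) ≤ Real.exp (K * T) := Real.one_le_exp hKT0
  rcases le_or_gt t s with hts | hts
  · have h1 := step1 t ⟨ht.1, hts⟩
    have h2 : E * ‖θ‖ ^ 2 * Real.exp (K * T) ≤ c * ‖θ‖ ^ 2 := by
      rw [hcdef]
      nlinarith [mul_nonneg (mul_nonneg hE0 (sq_nonneg (Real.exp (K * T)))) (sq_nonneg ‖θ‖)]
    exact le_trans h1 h2
  · have step2 : ∀ s₁ ∈ Ioo s t, ‖w t‖ ≤ (‖w s₁‖ + E * ‖θ‖ ^ 2) * Real.exp (K * T) := by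
      intro s₁ hs₁
      have h0s₁ : 0 < s₁ := hs0.trans hs₁.1
      have deriv₁ : ∀ u ∈ Ico s₁ T, HasDerivWithinAt w
          (F₁ (y u) u - F₁ (x u) u - DF₁ (x u) u (z u)) (Ici u) u := by
        intro u hu
        have hsu : s < u := lt_of_lt_of_le hs₁.1 hu.1
        have huT : u ∈ Icc (0:ℝ) T := ⟨by linarith, hu.2.le⟩
        have hzd := hz u huT (ne_of_gt hsu)
        rw [if_neg (not_lt.2 hsu.le)] at hzd
        have hD : HasDerivWithinAt w
            (F₁ (y u) u - F₁ (x u) u - DF₁ (x u) u (z u)) (Icc 0 T) u :=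
          ((hy₁ u ⟨hsu, hu.2.le⟩).sub (hx₁ u ⟨hsu, hu.2.le⟩)).sub hzd
        exact hD.mono_of_mem_nhdsWithin (Icc_mem_nhdsGE_of_mem ⟨huT.1, hu.2⟩)
      have bound₁ : ∀ u ∈ Ico s₁ T,
          ‖F₁ (y u) u - F₁ (x u) u - DF₁ (x u) u (z u)‖ ≤ K * ‖w u‖ + E * ‖θ‖ ^ 2 := by
        intro u hu
        have hsu : s < u := lt_of_lt_of_le hs₁.1 hu.1
        have huT : u ∈ Icc (0:ℝ) T := ⟨by linarith, hu.2.le⟩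
        have h1 := deriv_bound_aux hds₁ hLL' hL'0
          (t := u) ⟨by linarith, hu.2.le⟩ (zt := z u) (hyxρ u huT)
          (le_trans (hC₁ u ⟨hsu.le, hu.2.le⟩) hKC₁)
        have h2 := hyxsq u huT
        have h3 : w u = y u - x u - z u := rfl
        rw [h3]; linarith
      have gron2 := norm_le_gronwallBound_of_norm_deriv_right_le
        (f := w) (f' := fun u => F₁ (y u) u - F₁ (x u) u - DF₁ (x u) u (z u))
        (δ := ‖w s₁‖) (K := K) (ε := E * ‖θ‖ ^ 2) (a := s₁) (b := T)
        (hwc.mono (Icc_subset_Icc h0s₁.le le_rfl)) deriv₁ le_rfl bound₁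
      have h1 := gron2 t ⟨hs₁.2.le, ht.2⟩
      have h2 := hgb ‖w s₁‖ (E * ‖θ‖ ^ 2) (t - s₁) (norm_nonneg _) hθsq0
        (by linarith [hs₁.2]) (by linarith [ht.2, h0s₁])
      exact le_trans h1 h2
    have hIoo : s ∈ closure (Ioo s t) := by
      rw [closure_Ioo hts.ne]; exact ⟨le_rfl, hts.le⟩
    haveI : (𝓝[Ioo s t] s).NeBot := mem_closure_iff_nhdsWithin_neBot.1 hIoo
    have hsub : Ioo s t ⊆ Icc (0:ℝ) T :=
      fun u hu => ⟨by linarith [hu.1], by linarith [hu.2, ht.2]⟩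
    have hwten : Filter.Tendsto w (𝓝[Ioo s t] s) (𝓝 (w s)) :=
      ((hwc s ⟨hs0.le, hsT.le⟩).tendsto).mono_left (nhdsWithin_mono s hsub)
    have hten : Filter.Tendsto (fun s₁ => (‖w s₁‖ + E * ‖θ‖ ^ 2) * Real.exp (K * T))
        (𝓝[Ioo s t] s) (𝓝 ((‖w s‖ + E * ‖θ‖ ^ 2) * Real.exp (K * T))) :=
      ((hwten.norm.add tendsto_const_nhds).mul tendsto_const_nhds)
    have hlim : ‖w t‖ ≤ (‖w s‖ + E * ‖θ‖ ^ 2) * Real.exp (K * T) :=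
      ge_of_tendsto hten (eventually_nhdsWithin_of_forall step2)
    have hws : ‖w s‖ ≤ E * ‖θ‖ ^ 2 * Real.exp (K * T) := step1 s ⟨hs0.le, le_rfl⟩
    calc ‖w t‖ ≤ (‖w s‖ + E * ‖θ‖ ^ 2) * Real.exp (K * T) := hlim
      _ ≤ (E * ‖θ‖ ^ 2 * Real.exp (K * T) + E * ‖θ‖ ^ 2) * Real.exp (K * T) :=
          mul_le_mul_of_nonneg_right (by linarith) (Real.exp_pos _).le
      _ = c * ‖θ‖ ^ 2 := by rw [hcdef]; ring
end

section
/- Assume Dynamics Smoothness holds. Let Δs ∈ (0, ρ] and let x⁺ : [0,T] → ℝⁿ be a solution of the boundary-value problem with switch point s + Δs (ẋ⁺ = F₀(x⁺,t) on [0, s+Δs), ẋ⁺ = F₁(x⁺,t) on (s+Δs, T], x⁺_I(0) = b_I, x⁺_E(T) = b_E) such that θ := x⁺_J(0) − x_J(0) satisfies ‖θ‖ ≤ c₀Δs for a constant c₀, ‖x⁺(t) − x(t)‖ ≤ κΔs for all t ∈ [0,T], and x⁺ remains in the tubes T₀, T₁ on the corresponding time intervals. Let Z be the unique solution of: Ż(t)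 = ∇ₓF₀(x(t),t)Z(t) on [0,s) with Z_I(0) = 0, Z_J(0) = θ; the jump update Z(s+Δs) = Z(s) + Δs[F₀(x(s),s) − F₁(x(s),s)]; and Ż(t) = ∇ₓF₁(x(t),t)Z(t) on (s+Δs, T]. Then there is a constant C, independent of Δs, such that ‖x⁺(t) − x(t) − Z(t)‖ ≤ C|Δs|² for all t ∈ [0,s] ∪ [s+Δs, T], for all sufficiently small Δs > 0. -/
open Set Metric Filter Real
open scoped Topology

section GronwallHelpers

variable {E : Type*} [NormedAddCommGroup E] [NormedSpace ℝ E]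

lemma gronwallBound_mono_delta {δ δ' K ε x : ℝ} (h : δ ≤ δ') :
    gronwallBound δ K ε x ≤ gronwallBound δ' K ε x := by
  by_cases hK : K = 0
  · subst hK; simp only [gronwallBound_K0]; linarith
  · simp only [gronwallBound_of_K_ne_0 hK]
    have := Real.exp_nonneg (K * x)
    nlinarith

lemma gronwallBound_le_of_le {δ K ε x b : ℝ} (hδ : 0 ≤ δ) (hK : 0 ≤ K) (hε : 0 ≤ ε)
    (hx : 0 ≤ x) (hxb : x ≤ b) :
    gronwallBound δ K ε x ≤ (δ + ε * b) * Real.exp (K * b) := by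
  have hb : 0 ≤ b := hx.trans hxb
  by_cases hKz : K = 0
  · subst hKz
    simp only [gronwallBound_K0, zero_mul, Real.exp_zero, mul_one]
    nlinarith
  · have hKpos : 0 < K := lt_of_le_of_ne hK (Ne.symm hKz)
    simp only [gronwallBound_of_K_ne_0 hKz]
    have h1 : Real.exp (K * x) ≤ Real.exp (K * b) := by
      apply Real.exp_le_exp.2; nlinarith
    have h2 : Real.exp (K * b) - 1 ≤ (K * b) * Real.exp (K * b) := by
      have h3 := Real.add_one_le_exp (-(K * b))
      have h4 : Real.exp (-(K * b)) = (Real.exp (K * b))⁻¹ := Real.exp_neg _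
      have h5 : 0 < Real.exp (K * b) := Real.exp_pos _
      rw [h4] at h3
      have h6 : (-(K * b) + 1) * Real.exp (K * b) ≤ 1 := by
        calc (-(K * b) + 1) * Real.exp (K * b) ≤ (Real.exp (K * b))⁻¹ * Real.exp (K * b) :=
              mul_le_mul_of_nonneg_right h3 h5.le
          _ = 1 := inv_mul_cancel₀ h5.ne'
      nlinarith
    have h7 : 1 ≤ Real.exp (K * x) := Real.one_le_exp (by positivity)
    have h8 : ε / K * (Real.exp (K * x) - 1) ≤ ε / K * (Real.exp (K * b) - 1) :=
      mul_le_mul_of_nonneg_left (by linarith) (by positivity)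
    have h9 : ε / K * (Real.exp (K * b) - 1) ≤ ε / K * ((K * b) * Real.exp (K * b)) :=
      mul_le_mul_of_nonneg_left h2 (by positivity)
    have h10 : ε / K * ((K * b) * Real.exp (K * b)) = ε * b * Real.exp (K * b) := by
      field_simp
    nlinarith [mul_le_mul_of_nonneg_left h1 hδ]

/-- Grönwall inequality with the derivative hypothesis only on the open interval. -/
lemma gronwall_Ioo {f f' : ℝ → E} {δ K ε a b : ℝ}
    (hcont : ContinuousOn f (Icc a b))
    (hderiv : ∀ t ∈ Ioo a b, HasDerivWithinAt f (f' t) (Ici t) t)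
    (hbound : ∀ t ∈ Ioo a b, ‖f' t‖ ≤ K * ‖f t‖ + ε)
    (ha : ‖f a‖ ≤ δ) :
    ∀ t ∈ Icc a b, ‖f t‖ ≤ gronwallBound δ K ε (t - a) := by
  intro t ht
  rcases eq_or_lt_of_le ht.1 with h | h
  · subst h; rw [sub_self, gronwallBound_x0]; exact ha
  · have key : ∀ a' ∈ Ioo a t, ‖f t‖ ≤ gronwallBound ‖f a'‖ K ε (t - a') := by
      intro a' ha'
      have := norm_le_gronwallBound_of_norm_deriv_right_le (f := f) (f' := f') (a := a') (b := t)
        (δ := ‖f a'‖) (K := K) (ε := ε)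
        (hcont.mono (Icc_subset_Icc ha'.1.le ht.2))
        (fun τ hτ => hderiv τ ⟨ha'.1.trans_le hτ.1, hτ.2.trans_le ht.2⟩)
        le_rfl
        (fun τ hτ => hbound τ ⟨ha'.1.trans_le hτ.1, hτ.2.trans_le ht.2⟩)
      exact this t ⟨ha'.2.le, le_rfl⟩
    have hne : (𝓝[Ioo a t] a).NeBot := by
      rw [nhdsWithin_Ioo_eq_nhdsGT h]; infer_instance
    have hfl : Tendsto (fun a' => ‖f a'‖) (𝓝[Ioo a t] a) (𝓝 ‖f a‖) := by
      have : ContinuousWithinAt f (Ioo a t) a :=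
        (hcont a ⟨le_rfl, h.le.trans ht.2⟩).mono (fun y hy => ⟨hy.1.le, hy.2.le.trans ht.2⟩)
      exact this.norm
    have h1 : Tendsto (fun a' : ℝ => t - a') (𝓝[Ioo a t] a) (𝓝 (t - a)) :=
      (tendsto_const_nhds.sub tendsto_id).mono_left nhdsWithin_le_nhds
    have hgl : Tendsto (fun a' => gronwallBound ‖f a'‖ K ε (t - a')) (𝓝[Ioo a t] a)
        (𝓝 (gronwallBound ‖f a‖ K ε (t - a))) := by
      by_cases hK : K = 0
      · subst hK; simp only [gronwallBound_K0]
        exact hfl.add (tendsto_const_nhds.mul h1)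
      · simp only [gronwallBound_of_K_ne_0 hK]
        have h2 : Tendsto (fun a' : ℝ => Real.exp (K * (t - a'))) (𝓝[Ioo a t] a)
            (𝓝 (Real.exp (K * (t - a)))) :=
          (Real.continuous_exp.tendsto _).comp (tendsto_const_nhds.mul h1)
        exact (hfl.mul h2).add (tendsto_const_nhds.mul (h2.sub tendsto_const_nhds))
    have hle : ‖f t‖ ≤ gronwallBound ‖f a‖ K ε (t - a) :=
      ge_of_tendsto hgl (by filter_upwards [self_mem_nhdsWithin] with a' ha' using key a' ha')
    exact hle.trans (gronwallBound_mono_delta ha)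

lemma seg_norm_le' {χ₁ χ₂ c : E} {ρ : ℝ} (h₁ : ‖χ₁ - c‖ ≤ ρ) (h₂ : ‖χ₂ - c‖ ≤ ρ)
    {y : E} (hy : y ∈ segment ℝ χ₂ χ₁) : ‖y - c‖ ≤ ρ := by
  obtain ⟨u, v, hu, hv, huv, rfl⟩ := hy
  have hu1 : u = 1 - v := by linarith
  subst hu1
  have hrw : (1 - v) • χ₂ + v • χ₁ - c = (1 - v) • (χ₂ - c) + v • (χ₁ - c) := by module
  rw [hrw]
  calc ‖(1 - v) • (χ₂ - c) + v • (χ₁ - c)‖ ≤ ‖(1 - v) • (χ₂ - c)‖ + ‖v • (χ₁ - c)‖ :=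
        norm_add_le _ _
    _ = (1 - v) * ‖χ₂ - c‖ + v * ‖χ₁ - c‖ := by
        rw [norm_smul, norm_smul, Real.norm_of_nonneg hu, Real.norm_of_nonneg hv]
    _ ≤ (1 - v) * ρ + v * ρ :=
        add_le_add (mul_le_mul_of_nonneg_left h₂ hu) (mul_le_mul_of_nonneg_left h₁ hv)
    _ = ρ := by ring

lemma seg_sub_le' {χ₁ χ₂ : E} {y : E} (hy : y ∈ segment ℝ χ₂ χ₁) : ‖y - χ₂‖ ≤ ‖χ₁ - χ₂‖ := by
  obtain ⟨u, v, hu, hv, huv, rfl⟩ := hy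
  have hu1 : u = 1 - v := by linarith
  subst hu1
  have hrw : (1 - v) • χ₂ + v • χ₁ - χ₂ = v • (χ₁ - χ₂) := by module
  rw [hrw, norm_smul, Real.norm_of_nonneg hv]
  nlinarith [norm_nonneg (χ₁ - χ₂)]

end GronwallHelpers

/-- Mean value: `Fd` is Lipschitz in `χ` within the tube, with constant any bound on `DFd`. -/
lemma DynSmooth.lipschitz_x {n : ℕ} {Fd : (Fin n → ℝ) → ℝ → Fin n → ℝ}
    {DFd : (Fin n → ℝ) → ℝ → (Fin n → ℝ) →L[ℝ] (Fin n → ℝ)}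
    {x : ℝ → Fin n → ℝ} {a b ρ L : ℝ} (hds : DynSmooth n Fd DFd x a b ρ L)
    {M t : ℝ} {χ₁ χ₂ : Fin n → ℝ} (ht : t ∈ Icc a b)
    (h₁ : ‖χ₁ - x t‖ ≤ ρ) (h₂ : ‖χ₂ - x t‖ ≤ ρ)
    (hM : ∀ χ, ‖χ - x t‖ ≤ ρ → ‖DFd χ t‖ ≤ M) :
    ‖Fd χ₁ t - Fd χ₂ t‖ ≤ M * ‖χ₁ - χ₂‖ :=
  Convex.norm_image_sub_le_of_norm_hasFDerivWithin_le
    (f := fun y => Fd y t) (f' := fun y => DFd y t) (s := segment ℝ χ₂ χ₁)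
    (fun y hy => (hds.hasFDeriv y t ht (seg_norm_le' h₁ h₂ hy)).hasFDerivWithinAt)
    (fun y hy => hM y (seg_norm_le' h₁ h₂ hy))
    (convex_segment _ _) (left_mem_segment _ _ _) (right_mem_segment _ _ _)

/-- Quadratic Taylor remainder bound from Lipschitz continuity of the Jacobian. -/
lemma DynSmooth.taylor {n : ℕ} {Fd : (Fin n → ℝ) → ℝ → Fin n → ℝ}
    {DFd : (Fin n → ℝ) → ℝ → (Fin n → ℝ) →L[ℝ] (Fin n → ℝ)}
    {x : ℝ → Fin n → ℝ} {a b ρ L : ℝ} (hds : DynSmooth n Fd DFd x a b ρ L)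
    (hL : 0 ≤ L) {t : ℝ} {χ₁ χ₂ : Fin n → ℝ} (ht : t ∈ Icc a b)
    (h₁ : ‖χ₁ - x t‖ ≤ ρ) (h₂ : ‖χ₂ - x t‖ ≤ ρ) :
    ‖Fd χ₁ t - Fd χ₂ t - DFd χ₂ t (χ₁ - χ₂)‖ ≤ L * ‖χ₁ - χ₂‖ * ‖χ₁ - χ₂‖ := by
  have key := Convex.norm_image_sub_le_of_norm_hasFDerivWithin_le
    (f := fun y => Fd y t - DFd χ₂ t y) (f' := fun y => DFd y t - DFd χ₂ t)
    (s := segment ℝ χ₂ χ₁) (C := L * ‖χ₁ - χ₂‖)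
    (fun y hy => ((hds.hasFDeriv y t ht (seg_norm_le' h₁ h₂ hy)).sub
      ((DFd χ₂ t).hasFDerivAt)).hasFDerivWithinAt)
    (fun y hy => by
      calc ‖DFd y t - DFd χ₂ t‖ ≤ L * ‖y - χ₂‖ :=
            hds.lip t y χ₂ ht (seg_norm_le' h₁ h₂ hy) h₂
        _ ≤ L * ‖χ₁ - χ₂‖ := mul_le_mul_of_nonneg_left (seg_sub_le' hy) hL)
    (convex_segment _ _) (left_mem_segment _ _ _) (right_mem_segment _ _ _)
  have heq : (Fd χ₁ t - DFd χ₂ t χ₁) - (Fd χ₂ t - DFd χ₂ t χ₂)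
      = Fd χ₁ t - Fd χ₂ t - DFd χ₂ t (χ₁ - χ₂) := by
    rw [map_sub]; abel
  rw [heq] at key
  exact key

set_option maxHeartbeats 1600000 in
/-- the piecewise linearized system with jump update gives an
`O(Δs²)` approximation of `x⁺ - x`. -/
theorem switch_point_linearization_quadratic_error
    {n : ℕ} (hn : 0 < n) (T s ρ L c₀ κ : ℝ) (hT : 0 < T) (hs : s ∈ Ioo 0 T) (hρ : 0 < ρ)
    (I E : Finset (Fin n)) (hcard : I.card + E.card = n)
    (bI bE : Fin n → ℝ)
    (F₀ F₁ : (Fin n → ℝ) → ℝ → Fin n → ℝ)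
    (DF₀ DF₁ : (Fin n → ℝ) → ℝ → (Fin n → ℝ) →L[ℝ] (Fin n → ℝ))
    (x : ℝ → Fin n → ℝ)
    -- `x` solves the boundary-value problem with switch point `s`
    (hx : IsSwitchSol T s I E bI bE F₀ F₁ x)
    -- Dynamics Smoothness on the two tubes
    (hds₀ : DynSmooth n F₀ DF₀ x 0 (s + ρ) ρ L)
    (hds₁ : DynSmooth n F₁ DF₁ x (s - ρ) T ρ L)
    -- `F₁` is twice continuously differentiable in `t` along the trajectory `x` on `[s,s+ρ]`
    (hxtraj : ContDiffOn ℝ 1 (fun t => F₁ (x t) t) (Icc s (s + ρ))) :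
    ∃ C : ℝ, ∃ η > (0 : ℝ), ∀ Δs : ℝ, 0 < Δs → Δs ≤ ρ → Δs ≤ η →
      ∀ xp : ℝ → Fin n → ℝ,
      -- `xp = x⁺` solves the boundary-value problem with switch point `s + Δs` …
      IsSwitchSol T (s + Δs) I E bI bE F₀ F₁ xp →
      -- … with `θ := x⁺_J(0) - x_J(0)` of size `O(Δs)`, `‖x⁺ - x‖ ≤ κ Δs`,
      -- remaining in the tubes
      ‖(fun j : {j // j ∈ Iᶜ} => xp 0 j.1 - x 0 j.1)‖ ≤ c₀ * Δs →
      (∀ t ∈ Icc 0 T, ‖xp t - x t‖ ≤ κ * Δs) →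
      (∀ t ∈ Icc 0 T, ‖xp t - x t‖ ≤ ρ) →
      -- `F₀` is twice continuously differentiable in `t` along `x⁺` on `[s,s+ρ]`
      ContDiffOn ℝ 1 (fun t => F₀ (xp t) t) (Icc s (s + ρ)) →
      ∀ Z : ℝ → Fin n → ℝ,
      -- `Z` solves the piecewise linearized system with jump update, with
      -- `Z_I(0) = 0` and `Z_J(0) = θ = x⁺_J(0) - x_J(0)`
      ContinuousOn Z (Icc 0 s) →
      (∀ t ∈ Ico 0 s, HasDerivWithinAt Z (DF₀ (x t) t (Z t)) (Icc 0 s) t) →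
      (∀ i ∈ I, Z 0 i = 0) →
      (∀ j : {j // j ∈ Iᶜ}, Z 0 j.1 = xp 0 j.1 - x 0 j.1) →
      Z (s + Δs) = Z s + Δs • (F₀ (x s) s - F₁ (x s) s) →
      ContinuousOn Z (Icc (s + Δs) T) →
      (∀ t ∈ Ioc (s + Δs) T, HasDerivWithinAt Z (DF₁ (x t) t (Z t)) (Icc (s + Δs) T) t) →
      -- conclusion: `‖x⁺(t) - x(t) - Z(t)‖ ≤ C Δs²` on `[0,s] ∪ [s+Δs, T]`
      ∀ t ∈ Icc 0 s ∪ Icc (s + Δs) T, ‖xp t - x t - Z t‖ ≤ C * Δs ^ 2 := by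
  obtain ⟨hs0, hsT⟩ := hs
  obtain ⟨hxc, hxd₀, hxd₁, hxI, hxE⟩ := hx
  -- upgraded (nonnegative) Lipschitz constant
  set L' : ℝ := max L 0 with hL'def
  have hL' : (0:ℝ) ≤ L' := le_max_right _ _
  have hds₀' : DynSmooth n F₀ DF₀ x 0 (s + ρ) ρ L' :=
    ⟨hds₀.contDiffOn, hds₀.hasFDeriv, hds₀.contDeriv, fun t χ₁ χ₂ h1 h2 h3 =>
      (hds₀.lip t χ₁ χ₂ h1 h2 h3).trans
        (mul_le_mul_of_nonneg_right (le_max_left _ _) (norm_nonneg _))⟩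
  have hds₁' : DynSmooth n F₁ DF₁ x (s - ρ) T ρ L' :=
    ⟨hds₁.contDiffOn, hds₁.hasFDeriv, hds₁.contDeriv, fun t χ₁ χ₂ h1 h2 h3 =>
      (hds₁.lip t χ₁ χ₂ h1 h2 h3).trans
        (mul_le_mul_of_nonneg_right (le_max_left _ _) (norm_nonneg _))⟩
  set T₀ : ℝ := min (s + ρ) T with hT₀def
  have hsT₀ : s ≤ T₀ := le_min (by linarith) hsT.le
  have hT₀T : T₀ ≤ T := min_le_right _ _
  have hT₀ρ : T₀ ≤ s + ρ := min_le_left _ _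
  -- bound on `DF₀` on the compact tube over `[0, T₀]`
  obtain ⟨M₀d, hM₀dnn, hM₀d⟩ : ∃ M : ℝ, 0 ≤ M ∧ ∀ (χ : Fin n → ℝ) (τ : ℝ),
      τ ∈ Icc 0 T₀ → ‖χ - x τ‖ ≤ ρ → ‖DF₀ χ τ‖ ≤ M := by
    have hcomp : IsCompact ((fun q : ℝ × (Fin n → ℝ) => (x q.1 + q.2, q.1)) ''
        (Icc 0 T₀ ×ˢ closedBall 0 ρ)) := by
      apply IsCompact.image_of_continuousOn (isCompact_Icc.prod (isCompact_closedBall _ _))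
      have hxcont : ContinuousOn (fun q : ℝ × (Fin n → ℝ) => x q.1)
          (Icc 0 T₀ ×ˢ closedBall 0 ρ) :=
        hxc.comp continuousOn_fst (fun q hq => ⟨hq.1.1, hq.1.2.trans hT₀T⟩)
      exact (hxcont.add continuousOn_snd).prodMk continuousOn_fst
    have hsub : ((fun q : ℝ × (Fin n → ℝ) => (x q.1 + q.2, q.1)) ''
        (Icc 0 T₀ ×ˢ closedBall 0 ρ)) ⊆
        {p : (Fin n → ℝ) × ℝ | p.2 ∈ Icc 0 (s + ρ) ∧ ‖p.1 - x p.2‖ ≤ ρ} := by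
      rintro p ⟨⟨τ, u⟩, ⟨hτ, hu⟩, rfl⟩
      exact ⟨⟨hτ.1, hτ.2.trans hT₀ρ⟩, by
        simpa using mem_closedBall_zero_iff.1 hu⟩
    obtain ⟨M, hM⟩ := hcomp.exists_bound_of_continuousOn (hds₀.contDeriv.mono hsub)
    refine ⟨max M 0, le_max_right _ _, fun χ τ hτ hχ => le_trans ?_ (le_max_left _ _)⟩
    exact hM (χ, τ) ⟨(τ, χ - x τ), ⟨hτ, mem_closedBall_zero_iff.2 hχ⟩, by simp⟩
  -- bound on `DF₁` on the compact tube over `[s, T]`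
  obtain ⟨M₁d, hM₁dnn, hM₁d⟩ : ∃ M : ℝ, 0 ≤ M ∧ ∀ (χ : Fin n → ℝ) (τ : ℝ),
      τ ∈ Icc s T → ‖χ - x τ‖ ≤ ρ → ‖DF₁ χ τ‖ ≤ M := by
    have hcomp : IsCompact ((fun q : ℝ × (Fin n → ℝ) => (x q.1 + q.2, q.1)) ''
        (Icc s T ×ˢ closedBall 0 ρ)) := by
      apply IsCompact.image_of_continuousOn (isCompact_Icc.prod (isCompact_closedBall _ _))
      have hxcont : ContinuousOn (fun q : ℝ × (Fin n → ℝ) => x q.1)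
          (Icc s T ×ˢ closedBall 0 ρ) :=
        hxc.comp continuousOn_fst (fun q hq => ⟨hs0.le.trans hq.1.1, hq.1.2⟩)
      exact (hxcont.add continuousOn_snd).prodMk continuousOn_fst
    have hsub : ((fun q : ℝ × (Fin n → ℝ) => (x q.1 + q.2, q.1)) ''
        (Icc s T ×ˢ closedBall 0 ρ)) ⊆
        {p : (Fin n → ℝ) × ℝ | p.2 ∈ Icc (s - ρ) T ∧ ‖p.1 - x p.2‖ ≤ ρ} := by
      rintro p ⟨⟨τ, u⟩, ⟨hτ, hu⟩, rfl⟩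
      exact ⟨⟨by linarith [hτ.1], hτ.2⟩, by simpa using mem_closedBall_zero_iff.1 hu⟩
    obtain ⟨M, hM⟩ := hcomp.exists_bound_of_continuousOn (hds₁.contDeriv.mono hsub)
    refine ⟨max M 0, le_max_right _ _, fun χ τ hτ hχ => le_trans ?_ (le_max_left _ _)⟩
    exact hM (χ, τ) ⟨(τ, χ - x τ), ⟨hτ, mem_closedBall_zero_iff.2 hχ⟩, by simp⟩
  have hsρ : s < s + ρ := by linarith
  -- bound on `F₁` along the trajectory on `[s, s+ρ]`
  obtain ⟨Mψ, hMψnn, hMψ⟩ : ∃ M : ℝ, 0 ≤ M ∧ ∀ τ ∈ Icc s (s + ρ), ‖F₁ (x τ) τ‖ ≤ M := by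
    obtain ⟨M, hM⟩ := isCompact_Icc.exists_bound_of_continuousOn hxtraj.continuousOn
    exact ⟨max M 0, le_max_right _ _, fun τ hτ => (hM τ hτ).trans (le_max_left _ _)⟩
  -- bound on the derivative of `t ↦ F₁ (x t) t` on `[s, s+ρ]`
  obtain ⟨M₃, hM₃nn, hM₃⟩ : ∃ M : ℝ, 0 ≤ M ∧ ∀ τ ∈ Icc s (s + ρ),
      ‖derivWithin (fun t => F₁ (x t) t) (Icc s (s + ρ)) τ‖ ≤ M := by
    obtain ⟨M, hM⟩ := isCompact_Icc.exists_bound_of_continuousOn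
      (hxtraj.continuousOn_derivWithin (uniqueDiffOn_Icc hsρ) le_rfl)
    exact ⟨max M 0, le_max_right _ _, fun τ hτ => (hM τ hτ).trans (le_max_left _ _)⟩
  have hψlip : ∀ τ ∈ Icc s (s + ρ), ‖F₁ (x τ) τ - F₁ (x s) s‖ ≤ M₃ * (τ - s) := by
    intro τ hτ
    have key := Convex.norm_image_sub_le_of_norm_hasDerivWithin_le
      (f := fun t => F₁ (x t) t)
      (f' := fun t => derivWithin (fun t => F₁ (x t) t) (Icc s (s + ρ)) t)
      (s := Icc s (s + ρ)) (C := M₃)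
      (fun r hr => ((hxtraj.differentiableOn one_ne_zero) r hr).hasDerivWithinAt)
      (fun r hr => hM₃ r hr)
      (convex_Icc _ _) ⟨le_rfl, hsρ.le⟩ hτ
    rwa [Real.norm_eq_abs, abs_of_nonneg (by linarith [hτ.1])] at key
  -- geometric smallness parameters
  set m : ℝ := min ρ (T - s) with hmdef
  have hm : 0 < m := lt_min hρ (by linarith)
  have hmρ : m ≤ ρ := min_le_left _ _
  have hmT : m ≤ T - s := min_le_right _ _
  set η : ℝ := min (m / 2) (ρ / (2 * (Mψ + 1))) with hηdef
  have hη : 0 < η := lt_min (by linarith) (by positivity)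
  have hηm : η ≤ m / 2 := min_le_left _ _
  have hηψ : η ≤ ρ / (2 * (Mψ + 1)) := min_le_right _ _
  have hMψη : Mψ * η ≤ ρ / 2 := by
    have h1 : Mψ * η ≤ (Mψ + 1) * (ρ / (2 * (Mψ + 1))) :=
      mul_le_mul (by linarith) hηψ hη.le (by linarith)
    have h2 : (Mψ + 1) * (ρ / (2 * (Mψ + 1))) = ρ / 2 := by
      field_simp
    linarith
  have hsηT : s + η < T := by linarith [hηm, hmT]
  have hsηT₀ : s + η < T₀ := lt_min (by linarith) hsηT
  -- speed bound for the trajectory after the switch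
  have hxspeed : ∀ τ ∈ Icc s T₀, ‖x τ - x s‖ ≤ Mψ * (τ - s) := by
    intro τ hτ
    have key := gronwall_Ioo (f := fun r => x r - x s) (f' := fun r => F₁ (x r) r)
      (δ := 0) (K := 0) (ε := Mψ) (a := s) (b := τ)
      ((hxc.mono (Icc_subset_Icc hs0.le (hτ.2.trans hT₀T))).sub continuousOn_const)
      (fun r hr => by
        have hd := hxd₁ r ⟨hr.1, (hr.2.le.trans hτ.2).trans hT₀T⟩
        exact (hd.mono_of_mem_nhdsWithin (Icc_mem_nhdsGE_of_mem
          ⟨by linarith [hr.1], lt_of_lt_of_le hr.2 (hτ.2.trans hT₀T)⟩)).sub_const _)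
      (fun r hr => by
        rw [zero_mul, zero_add]
        exact hMψ r ⟨hr.1.le, (hr.2.le.trans hτ.2).trans hT₀ρ⟩)
      (by simp)
    have := key τ ⟨hτ.1, le_rfl⟩
    simpa [gronwallBound_K0] using this
  -- time-Lipschitz bound of `F₀` at the frozen point `x s`, via the open tube
  set U : Set ((Fin n → ℝ) × ℝ) := {p | p.2 ∈ Ioo 0 T₀ ∧ ‖p.1 - x p.2‖ < ρ} with hUdef
  have hUopen : IsOpen U := by
    rw [isOpen_iff_mem_nhds]
    rintro ⟨χ, τ⟩ ⟨hτ, hχ⟩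
    have hxa : ContinuousAt x τ :=
      hxc.continuousAt (Icc_mem_nhds hτ.1 (lt_of_lt_of_le hτ.2 hT₀T))
    have hc1 : ContinuousAt (fun p : (Fin n → ℝ) × ℝ => ‖p.1 - x p.2‖) (χ, τ) :=
      (continuous_fst.continuousAt.sub (hxa.comp continuous_snd.continuousAt)).norm
    have h1 := hc1.preimage_mem_nhds (Iio_mem_nhds hχ)
    have h2 : (fun p : (Fin n → ℝ) × ℝ => p.2) ⁻¹' Ioo 0 T₀ ∈ 𝓝 ((χ, τ) : (Fin n → ℝ) × ℝ) :=
      (isOpen_Ioo.preimage continuous_snd).mem_nhds hτ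
    filter_upwards [h1, h2] with p hp1 hp2
    exact ⟨hp2, hp1⟩
  have hUsub : U ⊆ {p : (Fin n → ℝ) × ℝ | p.2 ∈ Icc 0 (s + ρ) ∧ ‖p.1 - x p.2‖ ≤ ρ} :=
    fun p hp => ⟨⟨hp.1.1.le, hp.1.2.le.trans hT₀ρ⟩, hp.2.le⟩
  have hF₀U : ContDiffOn ℝ 1 (fun p : (Fin n → ℝ) × ℝ => F₀ p.1 p.2) U :=
    hds₀.contDiffOn.mono hUsub
  have hfdU : ContinuousOn (fderiv ℝ (fun p : (Fin n → ℝ) × ℝ => F₀ p.1 p.2)) U :=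
    hF₀U.continuousOn_fderiv_of_isOpen hUopen le_rfl
  set K₂ : Set ((Fin n → ℝ) × ℝ) := {x s} ×ˢ Icc s (s + η) with hK₂def
  have hK₂U : K₂ ⊆ U := by
    rintro ⟨χ, τ⟩ ⟨hχ, hτ⟩
    simp only [mem_singleton_iff] at hχ
    subst hχ
    refine ⟨⟨by linarith [hτ.1], lt_of_le_of_lt hτ.2 hsηT₀⟩, ?_⟩
    have h1 := hxspeed τ ⟨hτ.1, hτ.2.trans hsηT₀.le⟩
    have h2 : Mψ * (τ - s) ≤ Mψ * η := mul_le_mul_of_nonneg_left (by linarith [hτ.2]) hMψnn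
    calc ‖x s - x τ‖ = ‖x τ - x s‖ := norm_sub_rev _ _
      _ ≤ Mψ * (τ - s) := h1
      _ < ρ := by linarith
  obtain ⟨B₀, hB₀nn, hB₀⟩ : ∃ B : ℝ, 0 ≤ B ∧ ∀ p ∈ K₂,
      ‖fderiv ℝ (fun p : (Fin n → ℝ) × ℝ => F₀ p.1 p.2) p‖ ≤ B := by
    obtain ⟨B, hB⟩ := (isCompact_singleton.prod isCompact_Icc).exists_bound_of_continuousOn
      (hfdU.mono hK₂U)
    exact ⟨max B 0, le_max_right _ _, fun p hp => (hB p hp).trans (le_max_left _ _)⟩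
  have hTlip : ∀ τ ∈ Icc s (s + η), ‖F₀ (x s) τ - F₀ (x s) s‖ ≤ B₀ * (τ - s) := by
    intro τ hτ
    have key := Convex.norm_image_sub_le_of_norm_hasFDerivWithin_le
      (f := fun p : (Fin n → ℝ) × ℝ => F₀ p.1 p.2)
      (f' := fun p => fderiv ℝ (fun p : (Fin n → ℝ) × ℝ => F₀ p.1 p.2) p)
      (s := K₂) (C := B₀)
      (fun p hp => (((hF₀U.differentiableOn one_ne_zero).differentiableAt
        (hUopen.mem_nhds (hK₂U hp))).hasFDerivAt).hasFDerivWithinAt)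
      hB₀ ((convex_singleton _).prod (convex_Icc _ _))
      (show ((x s, s) : (Fin n → ℝ) × ℝ) ∈ K₂ from ⟨rfl, ⟨le_rfl, by linarith [hη]⟩⟩)
      (show ((x s, τ) : (Fin n → ℝ) × ℝ) ∈ K₂ from ⟨rfl, hτ⟩)
    have hnorm : ‖((x s, τ) - (x s, s) : (Fin n → ℝ) × ℝ)‖ = τ - s := by
      have h3 : ((x s, τ) - (x s, s) : (Fin n → ℝ) × ℝ) = (0, τ - s) := by
        simp [Prod.ext_iff]
      rw [h3, Prod.norm_def]
      simp only [norm_zero, Real.norm_eq_abs]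
      rw [abs_of_nonneg (show (0:ℝ) ≤ τ - s by linarith [hτ.1])]
      exact max_eq_right (by linarith [hτ.1])
    rw [hnorm] at key
    exact key
  -- constants
  set κ' : ℝ := max κ 0 with hκ'def
  have hκ' : (0:ℝ) ≤ κ' := le_max_right _ _
  set C₁ : ℝ := L' * κ' ^ 2 * s * Real.exp (M₀d * s) with hC₁def
  set C₂' : ℝ := M₀d * κ' + M₀d * Mψ + B₀ + M₃ with hC₂'def
  set C₂ : ℝ := C₁ + C₂' with hC₂def
  set C₃ : ℝ := (C₂ + L' * κ' ^ 2 * T) * Real.exp (M₁d * T) with hC₃def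
  have hC₁nn : 0 ≤ C₁ := by
    apply mul_nonneg (mul_nonneg (mul_nonneg hL' (sq_nonneg _)) hs0.le) (Real.exp_nonneg _)
  have hC₂'nn : 0 ≤ C₂' := by
    have := mul_nonneg hM₀dnn hκ'
    have := mul_nonneg hM₀dnn hMψnn
    rw [hC₂'def]; linarith
  have hC₂nn : 0 ≤ C₂ := by rw [hC₂def]; linarith
  refine ⟨max C₁ C₃, η, hη, ?_⟩
  intro Δs hΔ hΔρ hΔη xp hxp hθ hκb hρb hxpC1 Z hZc hZd hZI hZJ hZjump hZc2 hZd2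
  obtain ⟨hxpc, hxpd₀, hxpd₁, hxpI, hxpE⟩ := hxp
  have hsΔT : s + Δs < T := by linarith [hsηT]
  have hsΔT₀ : s + Δs ≤ T₀ := by
    have h1 : s + Δs ≤ s + η := by linarith
    linarith [hsηT₀]
  have hεnn : (0:ℝ) ≤ L' * κ' ^ 2 * Δs ^ 2 :=
    mul_nonneg (mul_nonneg hL' (sq_nonneg _)) (sq_nonneg _)
  -- Phase 1: Grönwall on [0, s]
  have phase1 : ∀ τ ∈ Icc (0:ℝ) s, ‖xp τ - x τ - Z τ‖ ≤ C₁ * Δs ^ 2 := by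
    have hw0 : xp 0 - x 0 - Z 0 = 0 := by
      funext i
      simp only [Pi.sub_apply, Pi.zero_apply]
      by_cases hi : i ∈ I
      · rw [hxpI i hi, hxI i hi, hZI i hi]; ring
      · rw [hZJ ⟨i, Finset.mem_compl.2 hi⟩]; ring
    have hcont1 : ContinuousOn (fun τ => xp τ - x τ - Z τ) (Icc 0 s) :=
      ((hxpc.mono (Icc_subset_Icc le_rfl hsT.le)).sub
        (hxc.mono (Icc_subset_Icc le_rfl hsT.le))).sub hZc
    have hderiv1 : ∀ τ ∈ Ico (0:ℝ) s, HasDerivWithinAt (fun τ => xp τ - x τ - Z τ)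
        (F₀ (xp τ) τ - F₀ (x τ) τ - DF₀ (x τ) τ (Z τ)) (Ici τ) τ := by
      intro τ hτ
      have hT_nhds : Icc (0:ℝ) T ∈ 𝓝[≥] τ := Icc_mem_nhdsGE_of_mem ⟨hτ.1, hτ.2.trans hsT⟩
      have hs_nhds : Icc (0:ℝ) s ∈ 𝓝[≥] τ := Icc_mem_nhdsGE_of_mem ⟨hτ.1, hτ.2⟩
      exact (((hxpd₀ τ ⟨hτ.1, by linarith [hτ.2]⟩).mono_of_mem_nhdsWithin hT_nhds).sub
        ((hxd₀ τ hτ).mono_of_mem_nhdsWithin hT_nhds)).sub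
        ((hZd τ hτ).mono_of_mem_nhdsWithin hs_nhds)
    have hbound1 : ∀ τ ∈ Ico (0:ℝ) s, ‖F₀ (xp τ) τ - F₀ (x τ) τ - DF₀ (x τ) τ (Z τ)‖
        ≤ M₀d * ‖xp τ - x τ - Z τ‖ + L' * κ' ^ 2 * Δs ^ 2 := by
      intro τ hτ
      have hτT : τ ∈ Icc (0:ℝ) T := ⟨hτ.1, (hτ.2.trans hsT).le⟩
      have hτsρ : τ ∈ Icc (0:ℝ) (s + ρ) := ⟨hτ.1, by linarith [hτ.2]⟩
      have hτT₀ : τ ∈ Icc (0:ℝ) T₀ := ⟨hτ.1, le_min (by linarith [hτ.2]) (hτ.2.trans hsT).le⟩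
      have hd1 : ‖xp τ - x τ‖ ≤ κ * Δs := hκb τ hτT
      have hd2 : ‖xp τ - x τ‖ ≤ ρ := hρb τ hτT
      have htay := hds₀'.taylor (χ₂ := x τ) hL' hτsρ hd2 (by simpa using hρ.le)
      have hDFb : ‖DF₀ (x τ) τ‖ ≤ M₀d := hM₀d (x τ) τ hτT₀ (by simpa using hρ.le)
      have heq : F₀ (xp τ) τ - F₀ (x τ) τ - DF₀ (x τ) τ (Z τ)
          = (F₀ (xp τ) τ - F₀ (x τ) τ - DF₀ (x τ) τ (xp τ - x τ))
            + DF₀ (x τ) τ (xp τ - x τ - Z τ) := by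
        simp only [map_sub]; abel
      rw [heq]
      have h6 : ‖xp τ - x τ‖ ≤ κ' * Δs :=
        hd1.trans (mul_le_mul_of_nonneg_right (le_max_left _ _) hΔ.le)
      have h7 : ‖xp τ - x τ‖ * ‖xp τ - x τ‖ ≤ (κ' * Δs) * (κ' * Δs) :=
        mul_le_mul h6 h6 (norm_nonneg _) (mul_nonneg hκ' hΔ.le)
      have h5 : L' * ‖xp τ - x τ‖ * ‖xp τ - x τ‖ ≤ L' * κ' ^ 2 * Δs ^ 2 := by
        calc L' * ‖xp τ - x τ‖ * ‖xp τ - x τ‖ = L' * (‖xp τ - x τ‖ * ‖xp τ - x τ‖) := by ring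
          _ ≤ L' * ((κ' * Δs) * (κ' * Δs)) := mul_le_mul_of_nonneg_left h7 hL'
          _ = L' * κ' ^ 2 * Δs ^ 2 := by ring
      calc ‖(F₀ (xp τ) τ - F₀ (x τ) τ - DF₀ (x τ) τ (xp τ - x τ))
            + DF₀ (x τ) τ (xp τ - x τ - Z τ)‖
          ≤ ‖F₀ (xp τ) τ - F₀ (x τ) τ - DF₀ (x τ) τ (xp τ - x τ)‖
            + ‖DF₀ (x τ) τ (xp τ - x τ - Z τ)‖ := norm_add_le _ _
        _ ≤ L' * ‖xp τ - x τ‖ * ‖xp τ - x τ‖ + M₀d * ‖xp τ - x τ - Z τ‖ :=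
            add_le_add htay (((DF₀ (x τ) τ).le_opNorm _).trans
              (mul_le_mul_of_nonneg_right hDFb (norm_nonneg _)))
        _ ≤ M₀d * ‖xp τ - x τ - Z τ‖ + L' * κ' ^ 2 * Δs ^ 2 := by linarith
    have key := norm_le_gronwallBound_of_norm_deriv_right_le (a := 0) (b := s)
      (f := fun τ => xp τ - x τ - Z τ)
      (f' := fun τ => F₀ (xp τ) τ - F₀ (x τ) τ - DF₀ (x τ) τ (Z τ))
      (δ := 0) (K := M₀d) (ε := L' * κ' ^ 2 * Δs ^ 2)
      hcont1 hderiv1 (by simp [hw0]) hbound1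
    intro τ hτ
    have h2 := key τ hτ
    have h3 := gronwallBound_le_of_le (x := τ - 0) (b := s) (le_refl (0:ℝ)) hM₀dnn hεnn
      (by simpa using hτ.1) (by simpa using hτ.2)
    refine h2.trans (h3.trans (le_of_eq ?_))
    rw [hC₁def]; ring
  -- Phase 2 initial bound: across the jump interval [s, s+Δs]
  have hjump : ‖xp (s + Δs) - x (s + Δs) - Z (s + Δs)‖ ≤ C₂ * Δs ^ 2 := by
    set v : Fin n → ℝ := F₀ (x s) s - F₁ (x s) s with hvdef
    have hΦcont : ContinuousOn (fun τ => xp τ - x τ - Z s - (τ - s) • v) (Icc s (s + Δs)) := by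
      have hsub : Icc s (s + Δs) ⊆ Icc 0 T := Icc_subset_Icc hs0.le hsΔT.le
      exact (((hxpc.mono hsub).sub (hxc.mono hsub)).sub continuousOn_const).sub
        (((continuous_id.sub continuous_const).smul continuous_const).continuousOn)
    have hΦderiv : ∀ τ ∈ Ioo s (s + Δs),
        HasDerivWithinAt (fun τ => xp τ - x τ - Z s - (τ - s) • v)
        (F₀ (xp τ) τ - F₁ (x τ) τ - v) (Ici τ) τ := by
      intro τ hτ
      have hτT : τ ∈ Ico (0:ℝ) T := ⟨by linarith [hτ.1], by linarith [hτ.2, hsΔT]⟩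
      have hnh : Icc (0:ℝ) T ∈ 𝓝[≥] τ := Icc_mem_nhdsGE_of_mem hτT
      have h1 : HasDerivWithinAt xp (F₀ (xp τ) τ) (Ici τ) τ :=
        (hxpd₀ τ ⟨hτT.1, hτ.2⟩).mono_of_mem_nhdsWithin hnh
      have h2 : HasDerivWithinAt x (F₁ (x τ) τ) (Ici τ) τ :=
        (hxd₁ τ ⟨hτ.1, hτT.2.le⟩).mono_of_mem_nhdsWithin hnh
      have h3 : HasDerivAt (fun r : ℝ => (r - s) • v) v τ := by
        have := ((hasDerivAt_id τ).sub_const s).smul_const v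
        simpa using this
      exact ((h1.sub h2).sub_const (Z s)).sub h3.hasDerivWithinAt
    have hΦbound : ∀ τ ∈ Ioo s (s + Δs), ‖F₀ (xp τ) τ - F₁ (x τ) τ - v‖
        ≤ 0 * ‖xp τ - x τ - Z s - (τ - s) • v‖ + C₂' * Δs := by
      intro τ hτ
      rw [zero_mul, zero_add]
      have hτT : τ ∈ Icc (0:ℝ) T := ⟨by linarith [hτ.1], by linarith [hτ.2, hsΔT]⟩
      have hτT₀ : τ ∈ Icc (0:ℝ) T₀ := ⟨hτT.1, by linarith [hτ.2, hsΔT₀]⟩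
      have hτsρ : τ ∈ Icc (0:ℝ) (s + ρ) := ⟨hτT.1, by linarith [hτ.2, hΔρ]⟩
      have hτsη : τ ∈ Icc s (s + η) := ⟨hτ.1.le, by linarith [hτ.2, hΔη]⟩
      have hτ₁ : τ ∈ Icc s (s + ρ) := ⟨hτ.1.le, by linarith [hτ.2, hΔρ]⟩
      have hxs : ‖x τ - x s‖ ≤ Mψ * Δs := by
        refine (hxspeed τ ⟨hτ.1.le, by linarith [hτ.2, hsΔT₀]⟩).trans ?_
        exact mul_le_mul_of_nonneg_left (by linarith [hτ.2]) hMψnn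
      have hxsρ : ‖x s - x τ‖ ≤ ρ := by
        rw [norm_sub_rev]
        refine hxs.trans ?_
        have : Mψ * Δs ≤ Mψ * η := mul_le_mul_of_nonneg_left hΔη hMψnn
        linarith
      have heq : F₀ (xp τ) τ - F₁ (x τ) τ - v
          = (F₀ (xp τ) τ - F₀ (x τ) τ) + (F₀ (x τ) τ - F₀ (x s) τ)
            + (F₀ (x s) τ - F₀ (x s) s) - (F₁ (x τ) τ - F₁ (x s) s) := by
        rw [hvdef]; abel
      rw [heq]
      have hA : ‖F₀ (xp τ) τ - F₀ (x τ) τ‖ ≤ M₀d * (κ' * Δs) := by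
        have h1 := hds₀'.lipschitz_x (χ₁ := xp τ) (χ₂ := x τ) hτsρ (hρb τ hτT)
          (by simpa using hρ.le) (fun χ hχ => hM₀d χ τ hτT₀ hχ)
        refine h1.trans (mul_le_mul_of_nonneg_left ((hκb τ hτT).trans
          (mul_le_mul_of_nonneg_right (le_max_left _ _) hΔ.le)) hM₀dnn)
      have hB : ‖F₀ (x τ) τ - F₀ (x s) τ‖ ≤ M₀d * (Mψ * Δs) := by
        have h1 := hds₀'.lipschitz_x (χ₁ := x τ) (χ₂ := x s) hτsρ (by simpa using hρ.le)
          hxsρ (fun χ hχ => hM₀d χ τ hτT₀ hχ)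
        exact h1.trans (mul_le_mul_of_nonneg_left hxs hM₀dnn)
      have hC : ‖F₀ (x s) τ - F₀ (x s) s‖ ≤ B₀ * Δs :=
        (hTlip τ hτsη).trans (mul_le_mul_of_nonneg_left (by linarith [hτ.2]) hB₀nn)
      have hD : ‖F₁ (x τ) τ - F₁ (x s) s‖ ≤ M₃ * Δs :=
        (hψlip τ hτ₁).trans (mul_le_mul_of_nonneg_left (by linarith [hτ.2]) hM₃nn)
      have hsum : M₀d * (κ' * Δs) + M₀d * (Mψ * Δs) + B₀ * Δs + M₃ * Δs = C₂' * Δs := by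
        rw [hC₂'def]; ring
      calc ‖(F₀ (xp τ) τ - F₀ (x τ) τ) + (F₀ (x τ) τ - F₀ (x s) τ)
            + (F₀ (x s) τ - F₀ (x s) s) - (F₁ (x τ) τ - F₁ (x s) s)‖
          ≤ ‖(F₀ (xp τ) τ - F₀ (x τ) τ) + (F₀ (x τ) τ - F₀ (x s) τ)
            + (F₀ (x s) τ - F₀ (x s) s)‖ + ‖F₁ (x τ) τ - F₁ (x s) s‖ := norm_sub_le _ _
        _ ≤ (‖F₀ (xp τ) τ - F₀ (x τ) τ‖ + ‖F₀ (x τ) τ - F₀ (x s) τ‖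
            + ‖F₀ (x s) τ - F₀ (x s) s‖) + ‖F₁ (x τ) τ - F₁ (x s) s‖ :=
            add_le_add_left norm_add₃_le _
        _ ≤ C₂' * Δs := by linarith
    have hΦs : ‖xp s - x s - Z s - ((s:ℝ) - s) • v‖ ≤ C₁ * Δs ^ 2 := by
      have := phase1 s ⟨hs0.le, le_rfl⟩
      simpa using this
    have key := gronwall_Ioo (a := s) (b := s + Δs) (δ := C₁ * Δs ^ 2) (K := 0) (ε := C₂' * Δs)
      hΦcont hΦderiv hΦbound hΦs (s + Δs) ⟨by linarith, le_rfl⟩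
    have hΦT : xp (s + Δs) - x (s + Δs) - Z s - ((s + Δs) - s) • v
        = xp (s + Δs) - x (s + Δs) - Z (s + Δs) := by
      rw [hZjump]
      have h4 : (s + Δs) - s = Δs := by ring
      rw [h4, hvdef]
      abel
    rw [hΦT] at key
    refine key.trans ?_
    simp only [gronwallBound_K0]
    refine le_of_eq ?_
    rw [hC₂def]; ring
  -- Phase 2: Grönwall on [s+Δs, T]
  have phase2 : ∀ τ ∈ Icc (s + Δs) T, ‖xp τ - x τ - Z τ‖ ≤ C₃ * Δs ^ 2 := by
    have hsub2 : Icc (s + Δs) T ⊆ Icc 0 T := Icc_subset_Icc (by linarith) le_rfl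
    have hcont2 : ContinuousOn (fun τ => xp τ - x τ - Z τ) (Icc (s + Δs) T) :=
      ((hxpc.mono hsub2).sub (hxc.mono hsub2)).sub hZc2
    have hderiv2 : ∀ τ ∈ Ioo (s + Δs) T, HasDerivWithinAt (fun τ => xp τ - x τ - Z τ)
        (F₁ (xp τ) τ - F₁ (x τ) τ - DF₁ (x τ) τ (Z τ)) (Ici τ) τ := by
      intro τ hτ
      have hnh : Icc (0:ℝ) T ∈ 𝓝[≥] τ := Icc_mem_nhdsGE_of_mem ⟨by linarith [hτ.1], hτ.2⟩
      have hnh2 : Icc (s + Δs) T ∈ 𝓝[≥] τ := Icc_mem_nhdsGE_of_mem ⟨hτ.1.le, hτ.2⟩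
      exact (((hxpd₁ τ ⟨hτ.1, hτ.2.le⟩).mono_of_mem_nhdsWithin hnh).sub
        ((hxd₁ τ ⟨by linarith [hτ.1], hτ.2.le⟩).mono_of_mem_nhdsWithin hnh)).sub
        ((hZd2 τ ⟨hτ.1, hτ.2.le⟩).mono_of_mem_nhdsWithin hnh2)
    have hbound2 : ∀ τ ∈ Ioo (s + Δs) T, ‖F₁ (xp τ) τ - F₁ (x τ) τ - DF₁ (x τ) τ (Z τ)‖
        ≤ M₁d * ‖xp τ - x τ - Z τ‖ + L' * κ' ^ 2 * Δs ^ 2 := by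
      intro τ hτ
      have hτT : τ ∈ Icc (0:ℝ) T := ⟨by linarith [hτ.1], hτ.2.le⟩
      have hτ₁ : τ ∈ Icc (s - ρ) T := ⟨by linarith [hτ.1], hτ.2.le⟩
      have hτsT : τ ∈ Icc s T := ⟨by linarith [hτ.1], hτ.2.le⟩
      have hd1 : ‖xp τ - x τ‖ ≤ κ * Δs := hκb τ hτT
      have hd2 : ‖xp τ - x τ‖ ≤ ρ := hρb τ hτT
      have htay := hds₁'.taylor (χ₂ := x τ) hL' hτ₁ hd2 (by simpa using hρ.le)
      have hDFb : ‖DF₁ (x τ) τ‖ ≤ M₁d := hM₁d (x τ) τ hτsT (by simpa using hρ.le)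
      have heq : F₁ (xp τ) τ - F₁ (x τ) τ - DF₁ (x τ) τ (Z τ)
          = (F₁ (xp τ) τ - F₁ (x τ) τ - DF₁ (x τ) τ (xp τ - x τ))
            + DF₁ (x τ) τ (xp τ - x τ - Z τ) := by
        simp only [map_sub]; abel
      rw [heq]
      have h6 : ‖xp τ - x τ‖ ≤ κ' * Δs :=
        hd1.trans (mul_le_mul_of_nonneg_right (le_max_left _ _) hΔ.le)
      have h7 : ‖xp τ - x τ‖ * ‖xp τ - x τ‖ ≤ (κ' * Δs) * (κ' * Δs) :=
        mul_le_mul h6 h6 (norm_nonneg _) (mul_nonneg hκ' hΔ.le)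
      have h5 : L' * ‖xp τ - x τ‖ * ‖xp τ - x τ‖ ≤ L' * κ' ^ 2 * Δs ^ 2 := by
        calc L' * ‖xp τ - x τ‖ * ‖xp τ - x τ‖ = L' * (‖xp τ - x τ‖ * ‖xp τ - x τ‖) := by ring
          _ ≤ L' * ((κ' * Δs) * (κ' * Δs)) := mul_le_mul_of_nonneg_left h7 hL'
          _ = L' * κ' ^ 2 * Δs ^ 2 := by ring
      calc ‖(F₁ (xp τ) τ - F₁ (x τ) τ - DF₁ (x τ) τ (xp τ - x τ))
            + DF₁ (x τ) τ (xp τ - x τ - Z τ)‖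
          ≤ ‖F₁ (xp τ) τ - F₁ (x τ) τ - DF₁ (x τ) τ (xp τ - x τ)‖
            + ‖DF₁ (x τ) τ (xp τ - x τ - Z τ)‖ := norm_add_le _ _
        _ ≤ L' * ‖xp τ - x τ‖ * ‖xp τ - x τ‖ + M₁d * ‖xp τ - x τ - Z τ‖ :=
            add_le_add htay (((DF₁ (x τ) τ).le_opNorm _).trans
              (mul_le_mul_of_nonneg_right hDFb (norm_nonneg _)))
        _ ≤ M₁d * ‖xp τ - x τ - Z τ‖ + L' * κ' ^ 2 * Δs ^ 2 := by linarith
    intro τ hτ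
    have key := gronwall_Ioo (a := s + Δs) (b := T) (δ := C₂ * Δs ^ 2) (K := M₁d)
      (ε := L' * κ' ^ 2 * Δs ^ 2) hcont2 hderiv2 hbound2 hjump τ hτ
    have h3 := gronwallBound_le_of_le (δ := C₂ * Δs ^ 2) (K := M₁d)
      (ε := L' * κ' ^ 2 * Δs ^ 2) (x := τ - (s + Δs)) (b := T)
      (mul_nonneg hC₂nn (sq_nonneg Δs)) hM₁dnn hεnn
      (by linarith [hτ.1]) (by linarith [hτ.2, hs0, hΔ])
    refine key.trans (h3.trans (le_of_eq ?_))
    rw [hC₃def]; ring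
  intro t ht
  rcases ht with h | h
  · exact (phase1 t h).trans (mul_le_mul_of_nonneg_right (le_max_left _ _) (sq_nonneg _))
  · exact (phase2 t h).trans (mul_le_mul_of_nonneg_right (le_max_right _ _) (sq_nonneg _))
end
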